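/- arXiv:2407.15654 — 4 statements merged into one kernel-verified Lean document; each statement's English description precedes it below -/
import Mathlib

section
/- Let n ≥ 1, let (q_α)_{α∈ℕ₀ⁿ} be polynomials in ℝ[x₁,…,xₙ], let y ∈ ℝⁿ, and let μ be a measure on ℝⁿ such that every monomial x^α is μ-integrable and ∫ x^α dμ(x) = α!·q_α(y) for all α ∈ ℕ₀ⁿ. Then for every polynomial f ∈ ℝ[x₁,…,xₙ] one has Σ_{α∈ℕ₀ⁿ} q_α(y)·(∂^α f)(y) = ∫_{ℝⁿ} f(x+y) dμ(x). -/
open MeasureTheory MvPolynomial Filter Topology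

/-- The iterated partial derivative `∂^α` on `ℝ[x₁,…,xₙ]`. -/
noncomputable def pd (n : ℕ) (α : Fin n →₀ ℕ) :
    MvPolynomial (Fin n) ℝ →ₗ[ℝ] MvPolynomial (Fin n) ℝ :=
  (List.ofFn (fun i : Fin n =>
    (((MvPolynomial.pderiv i).toLinearMap : Module.End ℝ (MvPolynomial (Fin n) ℝ)) ^ (α i)))).prod

/-- The multi-factorial `α! = α₁!⋯αₙ!`. -/
def mfact (n : ℕ) (α : Fin n →₀ ℕ) : ℕ := ∏ i, Nat.factorial (α i)

/-- The monomial function `x ↦ x^α`. -/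
def monomialFn (n : ℕ) (α : Fin n →₀ ℕ) : (Fin n → ℝ) → ℝ := fun x => ∏ i, x i ^ α i

/-- `s` is a `K`-moment sequence: there is a measure supported in `K` whose moments are `s`. -/
def IsMomentSeqOn (n : ℕ) (K : Set (Fin n → ℝ)) (s : (Fin n →₀ ℕ) → ℝ) : Prop :=
  ∃ μ : Measure (Fin n → ℝ), μ Kᶜ = 0 ∧
    ∀ α : Fin n →₀ ℕ, Integrable (monomialFn n α) μ ∧ (∫ x, monomialFn n α x ∂μ) = s α

/-- `Pos(K)`, the polynomials nonnegative on `K`. -/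
def PosOn (n : ℕ) (K : Set (Fin n → ℝ)) : Set (MvPolynomial (Fin n) ℝ) :=
  {f | ∀ x ∈ K, 0 ≤ MvPolynomial.eval x f}

/-- The operator `T = Σ_α q_α ∂^α` applied to `p` (the sum is finite since `∂^α p = 0`
for `|α| > deg p`). -/
noncomputable def applyOp (n : ℕ) (q : (Fin n →₀ ℕ) → MvPolynomial (Fin n) ℝ)
    (p : MvPolynomial (Fin n) ℝ) : MvPolynomial (Fin n) ℝ :=
  ∑ᶠ α : Fin n →₀ ℕ, q α * pd n α p

/-- `K^♯ = {x : x + K ⊆ K}`. -/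
def Ksharp (n : ℕ) (K : Set (Fin n → ℝ)) : Set (Fin n → ℝ) :=
  {x | ∀ y ∈ K, x + y ∈ K}

/-- `D(s) = Σ_α (s_α/α!) ∂^α` applied to `p`. -/
noncomputable def applyD (n : ℕ) (s : (Fin n →₀ ℕ) → ℝ) (p : MvPolynomial (Fin n) ℝ) :
    MvPolynomial (Fin n) ℝ :=
  ∑ᶠ α : Fin n →₀ ℕ, (s α / (mfact n α : ℝ)) • pd n α p

/-- The exponential of an endomorphism of a finite-dimensional real vector space,
defined via the matrix exponential in a basis. -/
noncomputable def expEnd {M : Type*} [AddCommGroup M] [Module ℝ M] [FiniteDimensional ℝ M]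
    (f : M →ₗ[ℝ] M) : M →ₗ[ℝ] M :=
  letI : DecidableEq (Module.Basis.ofVectorSpaceIndex ℝ M) := Classical.decEq _
  (Matrix.toLin (Module.Basis.ofVectorSpace ℝ M) (Module.Basis.ofVectorSpace ℝ M))
    (NormedSpace.exp
      ((LinearMap.toMatrix (Module.Basis.ofVectorSpace ℝ M) (Module.Basis.ofVectorSpace ℝ M)) f))



section Aux

open MvPolynomial Finsupp

variable {n : ℕ}

/-- A single partial derivative as an endomorphism. -/
noncomputable abbrev pdE (n : ℕ) (i : Fin n) : Module.End ℝ (MvPolynomial (Fin n) ℝ) :=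
  ((MvPolynomial.pderiv i).toLinearMap : Module.End ℝ (MvPolynomial (Fin n) ℝ))

lemma pdE_apply (i : Fin n) (p : MvPolynomial (Fin n) ℝ) :
    pdE n i p = MvPolynomial.pderiv i p := rfl

lemma pow_pderiv_monomial (i : Fin n) (k : ℕ) (β : Fin n →₀ ℕ) (c : ℝ) :
    (pdE n i ^ k) (MvPolynomial.monomial β c) =
      MvPolynomial.monomial (β - Finsupp.single i k)
        (c * ((β i).descFactorial k : ℝ)) := by
  induction k with
  | zero => simp
  | succ k ih =>
      have h1 : (pdE n i ^ (k + 1)) (MvPolynomial.monomial β c)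
          = pdE n i ((pdE n i ^ k) (MvPolynomial.monomial β c)) := by
        rw [pow_succ']; rfl
      rw [h1, ih, pdE_apply, MvPolynomial.pderiv_monomial, tsub_tsub, ← Finsupp.single_add]
      congr 1
      have h2 : (β - Finsupp.single i k) i = β i - k := by
        rw [Finsupp.tsub_apply, Finsupp.single_eq_same]
      rw [h2, Nat.descFactorial_succ]
      push_cast
      ring

lemma list_sum_single_apply_of_not_mem (α : Fin n →₀ ℕ) (a : Fin n) :
    ∀ (l : List (Fin n)), a ∉ l →
      ((l.map fun i => Finsupp.single i (α i)).sum) a = 0 := by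
  intro l
  induction l with
  | nil => simp
  | cons b l ih =>
      intro ha
      simp only [List.map_cons, List.sum_cons, Finsupp.add_apply]
      rw [Finsupp.single_eq_of_ne' (show b ≠ a from fun h => ha (h ▸ List.mem_cons_self)),
        ih (fun h => ha (List.mem_cons_of_mem _ h)), add_zero]

lemma list_prod_pd_monomial (α : Fin n →₀ ℕ) :
    ∀ (l : List (Fin n)), l.Nodup → ∀ (β : Fin n →₀ ℕ) (c : ℝ),
      ((l.map fun i => pdE n i ^ α i).prod) (MvPolynomial.monomial β c) =
        MvPolynomial.monomial (β - (l.map fun i => Finsupp.single i (α i)).sum)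
          (c * ((l.map fun i => ((β i).descFactorial (α i) : ℝ)).prod)) := by
  intro l
  induction l with
  | nil => intro _ β c; simp
  | cons a l ih =>
      intro hnd β c
      have ha : a ∉ l := (List.nodup_cons.mp hnd).1
      have hl : l.Nodup := (List.nodup_cons.mp hnd).2
      simp only [List.map_cons, List.prod_cons, List.sum_cons, Module.End.mul_apply]
      rw [ih hl β c, pow_pderiv_monomial]
      have hco : (β - (l.map fun i => Finsupp.single i (α i)).sum) a = β a := by
        rw [Finsupp.tsub_apply, list_sum_single_apply_of_not_mem α a l ha, Nat.sub_zero]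
      rw [hco]
      congr 1
      · rw [tsub_tsub, add_comm]
      · ring

lemma pd_monomial (α β : Fin n →₀ ℕ) (c : ℝ) :
    pd n α (MvPolynomial.monomial β c) =
      MvPolynomial.monomial (β - α) (c * (∏ i, ((β i).descFactorial (α i) : ℝ))) := by
  unfold pd
  have h1 : (List.ofFn fun i : Fin n => pdE n i ^ α i)
      = (List.finRange n).map fun i => pdE n i ^ α i := List.ofFn_eq_map
  rw [h1, list_prod_pd_monomial α (List.finRange n) (List.nodup_finRange n) β c]
  have hs : ((List.finRange n).map fun i => Finsupp.single i (α i)).sum = α := by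
    rw [← List.ofFn_eq_map, List.sum_ofFn]
    ext j
    simp [Finsupp.finset_sum_apply, Finsupp.single_apply]
  have hp2 : ((List.finRange n).map fun i => ((β i).descFactorial (α i) : ℝ)).prod
      = ∏ i, ((β i).descFactorial (α i) : ℝ) := by
    rw [← List.ofFn_eq_map, List.prod_ofFn]
  rw [hs, hp2]

lemma eval_zero_pd (α : Fin n →₀ ℕ) (g : MvPolynomial (Fin n) ℝ) :
    MvPolynomial.eval (0 : Fin n → ℝ) (pd n α g)
      = (mfact n α : ℝ) * MvPolynomial.coeff α g := by
  induction g using MvPolynomial.induction_on' with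
  | add p q hp hq => rw [map_add, map_add, MvPolynomial.coeff_add, hp, hq]; ring
  | monomial β c =>
      rw [pd_monomial, MvPolynomial.eval_monomial, MvPolynomial.coeff_monomial]
      by_cases hβ : β = α
      · subst hβ
        rw [if_pos rfl, tsub_self]
        simp [mfact, Nat.descFactorial_self, mul_comm]
      · rw [if_neg hβ, mul_zero]
        by_cases hle : β - α = 0
        · have hba : β ≤ α := tsub_eq_zero_iff_le.mp hle
          obtain ⟨i, hi⟩ : ∃ i, β i < α i := by
            by_contra hcon
            push_neg at hcon
            exact hβ (le_antisymm hba (Finsupp.le_def.mpr hcon))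
          have : (∏ i, ((β i).descFactorial (α i) : ℝ)) = 0 := by
            apply Finset.prod_eq_zero (Finset.mem_univ i)
            rw [Nat.descFactorial_eq_zero_iff_lt.mpr hi]; norm_num
          rw [this]; ring
        · have h0 : (β - α).prod (fun i e => (0 : Fin n → ℝ) i ^ e) = 0 := by
            obtain ⟨i, hi⟩ := Finsupp.support_nonempty_iff.mpr hle
            refine Finset.prod_eq_zero hi ?_
            simp only [Pi.zero_apply]
            exact zero_pow (Finsupp.mem_support_iff.mp hi)
          rw [h0]; ring

/-- The shift substitution `f(X) ↦ f(X + y)`. -/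
noncomputable def shiftHom (n : ℕ) (y : Fin n → ℝ) :
    MvPolynomial (Fin n) ℝ →+* MvPolynomial (Fin n) ℝ :=
  MvPolynomial.eval₂Hom MvPolynomial.C (fun i => MvPolynomial.X i + MvPolynomial.C (y i))

lemma eval_shiftHom (y x : Fin n → ℝ) (f : MvPolynomial (Fin n) ℝ) :
    MvPolynomial.eval x (shiftHom n y f) = MvPolynomial.eval (x + y) f := by
  have : (MvPolynomial.eval x).comp (shiftHom n y)
      = (MvPolynomial.eval (x + y) : MvPolynomial (Fin n) ℝ →+* ℝ) := by
    apply MvPolynomial.ringHom_ext <;> intro i <;>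
      simp [shiftHom, Pi.add_apply]
  calc MvPolynomial.eval x (shiftHom n y f)
      = ((MvPolynomial.eval x).comp (shiftHom n y)) f := rfl
    _ = MvPolynomial.eval (x + y) f := by rw [this]

lemma pderiv_shiftHom (y : Fin n → ℝ) (i : Fin n) (f : MvPolynomial (Fin n) ℝ) :
    MvPolynomial.pderiv i (shiftHom n y f) = shiftHom n y (MvPolynomial.pderiv i f) := by
  induction f using MvPolynomial.induction_on with
  | C a => simp [shiftHom]
  | add p q hp hq => simp only [map_add, hp, hq]
  | mul_X p j hp =>
      have hX : shiftHom n y (MvPolynomial.X j)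
          = MvPolynomial.X j + MvPolynomial.C (y j) := by simp [shiftHom]
      have h2 : MvPolynomial.pderiv i
            (MvPolynomial.X j + MvPolynomial.C (y j) : MvPolynomial (Fin n) ℝ)
          = shiftHom n y (MvPolynomial.pderiv i (MvPolynomial.X j)) := by
        rw [map_add, MvPolynomial.pderiv_C, add_zero]
        by_cases h : j = i
        · subst h; rw [MvPolynomial.pderiv_X_self, map_one]
        · rw [MvPolynomial.pderiv_X_of_ne h, map_zero]
      have hL : MvPolynomial.pderiv i (shiftHom n y (p * MvPolynomial.X j))
          = shiftHom n y (MvPolynomial.pderiv i p) * (MvPolynomial.X j + MvPolynomial.C (y j))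
            + shiftHom n y p * shiftHom n y (MvPolynomial.pderiv i (MvPolynomial.X j)) := by
        rw [map_mul, hX, MvPolynomial.pderiv_mul, hp, h2]
      have hR : shiftHom n y (MvPolynomial.pderiv i (p * MvPolynomial.X j))
          = shiftHom n y (MvPolynomial.pderiv i p) * (MvPolynomial.X j + MvPolynomial.C (y j))
            + shiftHom n y p * shiftHom n y (MvPolynomial.pderiv i (MvPolynomial.X j)) := by
        rw [MvPolynomial.pderiv_mul, map_add, map_mul, map_mul, hX]
      rw [hL, hR]

lemma pd_shiftHom (α : Fin n →₀ ℕ) (y : Fin n → ℝ) (f : MvPolynomial (Fin n) ℝ) :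
    pd n α (shiftHom n y f) = shiftHom n y (pd n α f) := by
  have key : ∀ (l : List (Module.End ℝ (MvPolynomial (Fin n) ℝ))),
      (∀ g ∈ l, ∀ p, g (shiftHom n y p) = shiftHom n y (g p)) →
      ∀ p, l.prod (shiftHom n y p) = shiftHom n y (l.prod p) := by
    intro l
    induction l with
    | nil => intro _ p; simp
    | cons a l ih =>
        intro h p
        simp only [List.prod_cons, Module.End.mul_apply]
        rw [ih (fun g hg => h g (List.mem_cons_of_mem _ hg)) p,
          h a List.mem_cons_self]
  unfold pd
  apply key
  intro g hg p
  rw [List.mem_ofFn] at hg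
  obtain ⟨i, rfl⟩ := hg
  show (pdE n i ^ α i) (shiftHom n y p) = shiftHom n y ((pdE n i ^ α i) p)
  generalize α i = k
  induction k with
  | zero => simp
  | succ k ih =>
      have h1 : ∀ q : MvPolynomial (Fin n) ℝ,
          (pdE n i ^ (k + 1)) q = pdE n i ((pdE n i ^ k) q) := by
        intro q; rw [pow_succ']; rfl
      rw [h1, h1, ih]
      exact pderiv_shiftHom y i _

lemma eval_pd_eq_coeff (α : Fin n →₀ ℕ) (y : Fin n → ℝ) (f : MvPolynomial (Fin n) ℝ) :
    MvPolynomial.eval y (pd n α f)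
      = (mfact n α : ℝ) * MvPolynomial.coeff α (shiftHom n y f) := by
  have h1 : MvPolynomial.eval y (pd n α f)
      = MvPolynomial.eval (0 : Fin n → ℝ) (shiftHom n y (pd n α f)) := by
    rw [eval_shiftHom, zero_add]
  rw [h1, ← pd_shiftHom, eval_zero_pd]

end Aux

/-- if `μ` represents the moments `α!·q_α(y)`, then
`Σ_α q_α(y)·(∂^α f)(y) = ∫ f(x+y) dμ(x)` for every polynomial `f`. -/
theorem stmt1 (n : ℕ) (hn : 1 ≤ n) (q : (Fin n →₀ ℕ) → MvPolynomial (Fin n) ℝ)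
    (y : Fin n → ℝ) (μ : Measure (Fin n → ℝ))
    (hμ : ∀ α : Fin n →₀ ℕ, Integrable (monomialFn n α) μ ∧
      (∫ x, monomialFn n α x ∂μ) = (mfact n α : ℝ) * MvPolynomial.eval y (q α)) :
    ∀ f : MvPolynomial (Fin n) ℝ,
      (∑ᶠ α : Fin n →₀ ℕ,
        MvPolynomial.eval y (q α) * MvPolynomial.eval y (pd n α f)) =
      ∫ x, MvPolynomial.eval (x + y) f ∂μ := by
  intro f
  set g := shiftHom n y f with hg
  have hT : ∀ α : Fin n →₀ ℕ, MvPolynomial.eval y (pd n α f)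
      = (mfact n α : ℝ) * MvPolynomial.coeff α g := fun α => eval_pd_eq_coeff α y f
  have hsupp : (Function.support fun α : Fin n →₀ ℕ =>
      MvPolynomial.eval y (q α) * MvPolynomial.eval y (pd n α f)) ⊆ ↑g.support := by
    intro α hα
    simp only [Function.mem_support] at hα
    simp only [Finset.mem_coe, MvPolynomial.mem_support_iff]
    intro hc
    exact hα (by rw [hT α, hc, mul_zero, mul_zero])
  rw [finsum_eq_sum_of_support_subset _ hsupp]
  have hint : ∀ x : Fin n → ℝ, MvPolynomial.eval (x + y) f
      = ∑ β ∈ g.support, MvPolynomial.coeff β g * monomialFn n β x := by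
    intro x
    rw [← eval_shiftHom, ← hg, MvPolynomial.eval_eq']
    refine Finset.sum_congr rfl fun β _ => ?_
    rfl
  calc ∑ α ∈ g.support, MvPolynomial.eval y (q α) * MvPolynomial.eval y (pd n α f)
      = ∑ β ∈ g.support, MvPolynomial.coeff β g
          * ((mfact n β : ℝ) * MvPolynomial.eval y (q β)) := by
        refine Finset.sum_congr rfl fun α _ => ?_
        rw [hT α]; ring
    _ = ∑ β ∈ g.support, MvPolynomial.coeff β g * ∫ x, monomialFn n β x ∂μ := by
        refine Finset.sum_congr rfl fun β _ => ?_
        rw [(hμ β).2]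
    _ = ∑ β ∈ g.support, ∫ x, MvPolynomial.coeff β g * monomialFn n β x ∂μ := by
        refine Finset.sum_congr rfl fun β _ => ?_
        rw [MeasureTheory.integral_const_mul]
    _ = ∫ x, ∑ β ∈ g.support, MvPolynomial.coeff β g * monomialFn n β x ∂μ := by
        rw [MeasureTheory.integral_finset_sum]
        intro β _
        exact ((hμ β).1).const_mul _
    _ = ∫ x, MvPolynomial.eval (x + y) f ∂μ := by
        refine MeasureTheory.integral_congr_ae (Filter.Eventually.of_forall fun x => ?_)
        exact (hint x).symm
end

section
/- Let n ≥ 1 and let K ⊆ ℝⁿ be a nonempty compact set. Let (c_α)_{α∈ℕ₀ⁿ} be real numbers and let T : ℝ[x₁,…,xₙ] → ℝ[x₁,…,xₙ] be the linear map Tp = Σ_α c_α·∂^α p. If T(Pos(K)) ⊆ Pos(K), then there is c ≥ 0 such that T = c·id; equivalently, c_0 ≥ 0 and c_α = 0 for all α ≠ 0. -/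
open MeasureTheory MvPolynomial Filter Topology

section Stmt9Aux

variable {n : ℕ}


def degA {n : ℕ} (α : Fin n →₀ ℕ) : ℕ := ∑ i, α i

noncomputable def Lpoly (n : ℕ) (u : Fin n → ℝ) (b : ℝ) : MvPolynomial (Fin n) ℝ :=
  (∑ i, C (u i) * X i) - C b

lemma pderiv_Lpoly (u : Fin n → ℝ) (b : ℝ) (j : Fin n) :
    pderiv j (Lpoly n u b) = C (u j) := by
  classical
  simp [Lpoly, pderiv_C_mul, Pi.single_apply, mul_ite, Finset.sum_ite_eq']

lemma pderiv_Lpoly_pow (u : Fin n → ℝ) (b : ℝ) (j : Fin n) (m : ℕ) :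
    pderiv j (Lpoly n u b ^ m) = ((m : ℝ) * u j) • Lpoly n u b ^ (m - 1) := by
  rw [pderiv_pow, pderiv_Lpoly, smul_eq_C_mul, C_mul,
    map_natCast (C : ℝ →+* MvPolynomial (Fin n) ℝ)]
  ring

lemma Nat.descFactorial_add' (m a b : ℕ) :
    m.descFactorial (b + a) = m.descFactorial b * (m - b).descFactorial a := by
  induction a with
  | zero => simp
  | succ a ih =>
    rw [show b + (a+1) = (b+a)+1 from rfl, Nat.descFactorial_succ, ih,
      Nat.descFactorial_succ, Nat.sub_sub]
    ring

lemma pditer (u : Fin n → ℝ) (b : ℝ) (j : Fin n) (t m : ℕ) :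
    (((pderiv j).toLinearMap : Module.End ℝ (MvPolynomial (Fin n) ℝ)) ^ t) (Lpoly n u b ^ m)
      = ((m.descFactorial t : ℝ) * u j ^ t) • Lpoly n u b ^ (m - t) := by
  induction t with
  | zero => simp
  | succ t ih =>
    rw [pow_succ', Module.End.mul_apply, ih]
    show pderiv j _ = _
    rw [Derivation.map_smul, pderiv_Lpoly_pow, smul_smul, Nat.sub_sub]
    congr 1
    push_cast [Nat.descFactorial_succ]
    ring


lemma listpd (u : Fin n → ℝ) (b : ℝ) (α : Fin n →₀ ℕ) (m : ℕ) (l : List (Fin n)) :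
    ((l.map fun i =>
        (((pderiv i).toLinearMap : Module.End ℝ (MvPolynomial (Fin n) ℝ)) ^ (α i))).prod)
      (Lpoly n u b ^ m)
    = ((m.descFactorial (l.map fun i => α i).sum : ℝ) * (l.map fun i => u i ^ α i).prod) •
        Lpoly n u b ^ (m - (l.map fun i => α i).sum) := by
  induction l with
  | nil => simp
  | cons i l ih =>
    rw [List.map_cons, List.prod_cons, Module.End.mul_apply, ih, _root_.map_smul, pditer, smul_smul,
      List.map_cons, List.map_cons, List.sum_cons, List.prod_cons, Nat.sub_sub]
    rw [show (α i + (l.map fun i => α i).sum) = ((l.map fun i => α i).sum + α i) from add_comm _ _,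
      Nat.descFactorial_add']
    congr 1
    push_cast
    ring

lemma pd_Lpow (u : Fin n → ℝ) (b : ℝ) (α : Fin n →₀ ℕ) (m : ℕ) :
    pd n α (Lpoly n u b ^ m)
      = ((m.descFactorial (degA α) : ℝ) * ∏ i, u i ^ α i) • Lpoly n u b ^ (m - degA α) := by
  rw [pd, List.ofFn_eq_map, listpd]
  rw [show ((List.finRange n).map fun i => α i).sum = degA α from (Fin.sum_univ_def _).symm,
    show ((List.finRange n).map fun i => u i ^ α i).prod = ∏ i, u i ^ α i from
      (Fin.prod_univ_def _).symm]

lemma eval_Lpoly (u : Fin n → ℝ) (b : ℝ) (x : Fin n → ℝ) :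
    eval x (Lpoly n u b) = (∑ i, u i * x i) - b := by
  simp [Lpoly]

lemma eval_pd_Lpow (u : Fin n → ℝ) (b : ℝ) (α : Fin n →₀ ℕ) (m : ℕ) (x : Fin n → ℝ) :
    eval x (pd n α (Lpoly n u b ^ m))
      = (m.descFactorial (degA α) : ℝ) * (∏ i, u i ^ α i) *
          ((∑ i, u i * x i) - b) ^ (m - degA α) := by
  rw [pd_Lpow, smul_eq_C_mul, map_mul, map_pow, eval_C, eval_Lpoly, mul_assoc]

lemma degle_finite (n m : ℕ) : {α : Fin n →₀ ℕ | degA α ≤ m}.Finite := by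
  have h1 : Set.Finite ((fun (α : Fin n →₀ ℕ) => (α : Fin n → ℕ)) ⁻¹'
      (Set.univ.pi fun _ : Fin n => Set.Iic m)) :=
    Set.Finite.preimage (DFunLike.coe_injective : Function.Injective ((⇑) : (Fin n →₀ ℕ) → (Fin n → ℕ))).injOn
      (Set.Finite.pi fun _ => Set.finite_Iic m)
  refine h1.subset fun α hα => ?_
  intro i _
  exact le_trans (Finset.single_le_sum (fun i _ => Nat.zero_le (α i)) (Finset.mem_univ i)) hα

lemma pd_Lpow_zero (u : Fin n → ℝ) (b : ℝ) (α : Fin n →₀ ℕ) (m : ℕ) (h : m < degA α) :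
    pd n α (Lpoly n u b ^ m) = 0 := by
  rw [pd_Lpow, Nat.descFactorial_eq_zero_iff_lt.2 h]
  simp

noncomputable def qf (n : ℕ) (c : (Fin n →₀ ℕ) → ℝ) (m : ℕ) (u : Fin n → ℝ) : ℝ :=
  ∑ α ∈ (degle_finite n m).toFinset, (if degA α = m then c α * ∏ i, u i ^ α i else 0)

lemma support_pd_sub (c : (Fin n →₀ ℕ) → ℝ) (u : Fin n → ℝ) (b : ℝ) (m : ℕ) :
    (Function.support fun α : Fin n →₀ ℕ => c α • pd n α (Lpoly n u b ^ m)) ⊆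
      {α | degA α ≤ m} := by
  intro α hα
  simp only [Function.mem_support] at hα
  by_contra h
  exact hα (by rw [pd_Lpow_zero u b α m (lt_of_not_ge h), smul_zero])

lemma eval_T_Lpow (c : (Fin n →₀ ℕ) → ℝ) (u : Fin n → ℝ) (b : ℝ) (m : ℕ) (x0 : Fin n → ℝ)
    (hx0 : (∑ i, u i * x0 i) = b) :
    eval x0 (∑ᶠ α : Fin n →₀ ℕ, c α • pd n α (Lpoly n u b ^ m)) =
      (m.factorial : ℝ) * qf n c m u := by
  have hfin : (Function.support fun α : Fin n →₀ ℕ => c α • pd n α (Lpoly n u b ^ m)).Finite :=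
    (degle_finite n m).subset (support_pd_sub c u b m)
  have hmap : eval x0 (∑ᶠ α : Fin n →₀ ℕ, c α • pd n α (Lpoly n u b ^ m)) =
      ∑ᶠ α : Fin n →₀ ℕ, eval x0 (c α • pd n α (Lpoly n u b ^ m)) :=
    AddMonoidHom.map_finsum (eval x0 : MvPolynomial (Fin n) ℝ →+* ℝ).toAddMonoidHom hfin
  rw [hmap]
  have hev : ∀ α : Fin n →₀ ℕ, eval x0 (c α • pd n α (Lpoly n u b ^ m)) =
      c α * ((m.descFactorial (degA α) : ℝ) * (∏ i, u i ^ α i) * (0:ℝ) ^ (m - degA α)) := by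
    intro α
    rw [smul_eq_C_mul, map_mul, eval_C, eval_pd_Lpow, hx0, sub_self]
  rw [finsum_congr hev]
  rw [finsum_eq_sum_of_support_subset _ (s := (degle_finite n m).toFinset) ?side]
  case side =>
    intro α hα
    rw [Set.Finite.coe_toFinset]
    by_contra h
    apply hα
    have hlt : m < degA α := lt_of_not_ge h
    simp [Nat.descFactorial_eq_zero_iff_lt.2 hlt]
  rw [qf, Finset.mul_sum]
  refine Finset.sum_congr rfl fun α hα => ?_
  rw [Set.Finite.mem_toFinset] at hα
  have hα' : degA α ≤ m := hα
  rcases eq_or_lt_of_le hα' with h | h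
  · rw [if_pos h, h, Nat.sub_self, pow_zero, Nat.descFactorial_self]
    ring
  · rw [if_neg (by omega), zero_pow (by omega), mul_zero, mul_zero, mul_zero]

lemma degA_eq_zero {α : Fin n →₀ ℕ} (h : degA α = 0) : α = 0 := by
  ext i
  have := Finset.sum_eq_zero_iff.1 h i (Finset.mem_univ i)
  simpa using this

lemma qf_coeff_zero (c : (Fin n →₀ ℕ) → ℝ) (m : ℕ) (h : ∀ u : Fin n → ℝ, qf n c m u = 0) :
    ∀ α : Fin n →₀ ℕ, degA α = m → c α = 0 := by
  intro α₀ hα₀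
  set p : MvPolynomial (Fin n) ℝ :=
    ∑ α ∈ (degle_finite n m).toFinset, (if degA α = m then monomial α (c α) else 0) with hp
  have hev : ∀ u : Fin n → ℝ, eval u p = qf n c m u := by
    intro u
    rw [hp, map_sum, qf]
    refine Finset.sum_congr rfl fun α _ => ?_
    split_ifs
    · rw [eval_monomial]
      congr 1
      exact Finsupp.prod_pow α u
    · exact map_zero _
  have hp0 : p = 0 := by
    apply MvPolynomial.funext
    intro u
    rw [hev u, h u, map_zero]
  have := congrArg (fun q => MvPolynomial.coeff α₀ q) hp0
  simp only [hp, MvPolynomial.coeff_sum, coeff_zero] at this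
  rw [Finset.sum_eq_single α₀] at this
  · rwa [if_pos hα₀, coeff_monomial, if_pos rfl] at this
  · intro β _ hβ
    split_ifs
    · rw [coeff_monomial, if_neg hβ]
    · exact coeff_zero _
  · intro hmem
    exact absurd ((Set.Finite.mem_toFinset (degle_finite n m)).2
      (show degA α₀ ≤ m from le_of_eq hα₀)) hmem

lemma qf_neg (c : (Fin n →₀ ℕ) → ℝ) (m : ℕ) (u : Fin n → ℝ) :
    qf n c m (-u) = (-1 : ℝ) ^ m * qf n c m u := by
  rw [qf, qf, Finset.mul_sum]
  refine Finset.sum_congr rfl fun α _ => ?_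
  split_ifs with h
  · have : ∏ i, (-u) i ^ α i = (-1 : ℝ) ^ m * ∏ i, u i ^ α i := by
      have h1 : ∀ i ∈ Finset.univ, (-u) i ^ α i = (-1 : ℝ) ^ α i * u i ^ α i := by
        intro i _
        rw [Pi.neg_apply, neg_pow]
      rw [Finset.prod_congr rfl h1, Finset.prod_mul_distrib, Finset.prod_pow_eq_pow_sum]
      rw [show ∑ i, α i = m from h]
    rw [this]
    ring
  · rw [mul_zero]

lemma qf_zero_const (c : (Fin n →₀ ℕ) → ℝ) (u : Fin n → ℝ) : qf n c 0 u = c 0 := by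
  rw [qf, Finset.sum_eq_single (0 : Fin n →₀ ℕ)]
  · rw [if_pos (by simp [degA])]
    have : ∀ i ∈ Finset.univ, u i ^ (0 : Fin n →₀ ℕ) i = 1 := by
      intro i _
      rw [Finsupp.coe_zero, Pi.zero_apply, pow_zero]
    rw [Finset.prod_congr rfl this, Finset.prod_const_one, mul_one]
  · intro β _ hβ
    rw [if_neg (fun hc => hβ (degA_eq_zero hc))]
  · intro hmem
    exact absurd ((Set.Finite.mem_toFinset (degle_finite n 0)).2
      (show degA (0 : Fin n →₀ ℕ) ≤ 0 from by simp [degA])) hmem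


lemma eval_T_comb (c : (Fin n →₀ ℕ) → ℝ) (u : Fin n → ℝ) (b a : ℝ) (k : ℕ) (x0 : Fin n → ℝ)
    (hx0 : (∑ i, u i * x0 i) = b) :
    eval x0 (∑ᶠ α : Fin n →₀ ℕ,
        c α • pd n α (a • Lpoly n u b ^ (k-1) - Lpoly n u b ^ k)) =
      a * ((k-1).factorial : ℝ) * qf n c (k-1) u - (k.factorial : ℝ) * qf n c k u := by
  have hcong : ∀ α : Fin n →₀ ℕ,
      c α • pd n α (a • Lpoly n u b ^ (k-1) - Lpoly n u b ^ k) =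
        a • (c α • pd n α (Lpoly n u b ^ (k-1))) - c α • pd n α (Lpoly n u b ^ k) := by
    intro α
    rw [map_sub, _root_.map_smul, smul_sub, smul_comm]
  rw [finsum_congr hcong]
  have hf1 : (Function.support fun α : Fin n →₀ ℕ =>
      a • (c α • pd n α (Lpoly n u b ^ (k-1)))).Finite := by
    refine ((degle_finite n (k-1)).subset (support_pd_sub c u b (k-1))).subset ?_
    intro α hα
    simp only [Function.mem_support] at hα ⊢
    intro h0
    exact hα (by rw [h0, smul_zero])
  have hf2 : (Function.support fun α : Fin n →₀ ℕ =>
      c α • pd n α (Lpoly n u b ^ k)).Finite :=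
    (degle_finite n k).subset (support_pd_sub c u b k)
  rw [finsum_sub_distrib hf1 hf2, map_sub]
  rw [← smul_finsum' a ((degle_finite n (k-1)).subset (support_pd_sub c u b (k-1)))]
  rw [smul_eq_C_mul, map_mul, eval_C, eval_T_Lpow c u b (k-1) x0 hx0, eval_T_Lpow c u b k x0 hx0]
  ring

lemma cont_lin (u : Fin n → ℝ) : Continuous fun x : Fin n → ℝ => ∑ i, u i * x i :=
  continuous_finset_sum _ fun i _ => continuous_const.mul (continuous_apply i)

lemma qf_nonneg {K : Set (Fin n → ℝ)} (hKne : K.Nonempty) (hKcomp : IsCompact K)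
    (c : (Fin n →₀ ℕ) → ℝ)
    (hpres : ∀ f ∈ PosOn n K, (∑ᶠ α : Fin n →₀ ℕ, c α • pd n α f) ∈ PosOn n K)
    (m : ℕ) (u : Fin n → ℝ) : 0 ≤ qf n c m u := by
  obtain ⟨x0, hx0K, hx0min⟩ := hKcomp.exists_isMinOn hKne (cont_lin u).continuousOn
  set b := ∑ i, u i * x0 i with hb
  have hpos : Lpoly n u b ^ m ∈ PosOn n K := by
    intro x hx
    rw [map_pow, eval_Lpoly]
    exact pow_nonneg (sub_nonneg.2 (isMinOn_iff.mp hx0min x hx)) m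
  have h := hpres _ hpos x0 hx0K
  rw [eval_T_Lpow c u b m x0 rfl] at h
  have hfac : (0:ℝ) < (m.factorial : ℝ) := by exact_mod_cast m.factorial_pos
  nlinarith

lemma qf_even_nonpos {K : Set (Fin n → ℝ)} (hKne : K.Nonempty) (hKcomp : IsCompact K)
    (c : (Fin n →₀ ℕ) → ℝ)
    (hpres : ∀ f ∈ PosOn n K, (∑ᶠ α : Fin n →₀ ℕ, c α • pd n α f) ∈ PosOn n K)
    (k : ℕ) (hk1 : 1 ≤ k) (hprev : ∀ u : Fin n → ℝ, qf n c (k-1) u = 0) (u : Fin n → ℝ) :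
    qf n c k u ≤ 0 := by
  obtain ⟨x0, hx0K, hx0min⟩ := hKcomp.exists_isMinOn hKne (cont_lin u).continuousOn
  obtain ⟨x1, hx1K, hx1max⟩ := hKcomp.exists_isMaxOn hKne (cont_lin u).continuousOn
  set b := ∑ i, u i * x0 i with hb
  set B := ∑ i, u i * x1 i with hB
  have hpos : (B - b) • Lpoly n u b ^ (k-1) - Lpoly n u b ^ k ∈ PosOn n K := by
    intro x hx
    rw [map_sub, smul_eq_C_mul, map_mul, eval_C, map_pow, map_pow, eval_Lpoly]
    set t := (∑ i, u i * x i) - b with ht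
    have ht0 : 0 ≤ t := sub_nonneg.2 (isMinOn_iff.mp hx0min x hx)
    have htB : t ≤ B - b := by
      have := isMaxOn_iff.mp hx1max x hx
      simp only [ht, hB]
      linarith
    have hpow : t ^ k = t ^ (k-1) * t := by rw [← pow_succ, Nat.sub_add_cancel hk1]
    rw [hpow]
    nlinarith [mul_nonneg (pow_nonneg ht0 (k-1)) (sub_nonneg.2 htB)]
  have h := hpres _ hpos x0 hx0K
  rw [eval_T_comb c u b (B - b) k x0 rfl, hprev u] at h
  have hfac : (0:ℝ) < (k.factorial : ℝ) := by exact_mod_cast k.factorial_pos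
  nlinarith

end Stmt9Aux

/-- Corollary `compactK`: on a nonempty compact `K`, every
constant-coefficient `K`-positivity preserver `T = Σ_α c_α ∂^α` is a nonnegative multiple
of the identity: `c_0 ≥ 0` and `c_α = 0` for `α ≠ 0`. -/
theorem stmt9 (n : ℕ) (hn : 1 ≤ n) (K : Set (Fin n → ℝ)) (hKne : K.Nonempty)
    (hKcomp : IsCompact K) (c : (Fin n →₀ ℕ) → ℝ)
    (hpres : ∀ f ∈ PosOn n K,
      (∑ᶠ α : Fin n →₀ ℕ, c α • pd n α f) ∈ PosOn n K) :
    0 ≤ c 0 ∧ ∀ α : Fin n →₀ ℕ, α ≠ 0 → c α = 0 := by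
  have hodd : ∀ m : ℕ, Odd m → ∀ β : Fin n →₀ ℕ, degA β = m → c β = 0 := by
    intro m hm
    apply qf_coeff_zero
    intro u
    have h1 := qf_nonneg hKne hKcomp c hpres m u
    have h2 := qf_nonneg hKne hKcomp c hpres m (-u)
    rw [qf_neg, hm.neg_one_pow] at h2
    linarith
  constructor
  · obtain ⟨xb, hxb⟩ := hKne
    have h1 : (1 : MvPolynomial (Fin n) ℝ) ∈ PosOn n K := by
      intro x _
      rw [map_one]
      norm_num
    have h := hpres 1 h1 xb hxb
    rw [show (1 : MvPolynomial (Fin n) ℝ) = Lpoly n (fun _ => 0) 0 ^ 0 from (pow_zero _).symm,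
      eval_T_Lpow c (fun _ => 0) 0 0 xb (by simp), qf_zero_const] at h
    simpa using h
  · intro α hα
    set k := degA α with hk
    have hk1 : 1 ≤ k := by
      rcases Nat.eq_zero_or_pos k with h | h
      · exact absurd (degA_eq_zero (hk ▸ h)) hα
      · exact h
    rcases Nat.even_or_odd k with hev | hodd'
    · have hkm1 : Odd (k - 1) := Nat.Even.sub_odd hk1 hev odd_one
      have hprev : ∀ u : Fin n → ℝ, qf n c (k-1) u = 0 := by
        intro u
        apply Finset.sum_eq_zero
        intro β _
        split_ifs with h
        · rw [hodd (k-1) hkm1 β h, zero_mul]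
        · rfl
      apply qf_coeff_zero c k _ α rfl
      intro u
      have h1 := qf_nonneg hKne hKcomp c hpres k u
      have h2 := qf_even_nonpos hKne hKcomp c hpres k hk1 hprev u
      linarith
    · exact hodd k hodd' α rfl
end

section
/- Let n ≥ 1, let C ⊆ ℝ[x₁,…,xₙ] be a nonempty convex set such that C_d := C ∩ ℝ[x₁,…,xₙ]_{≤d} is closed in ℝ[x₁,…,xₙ]_{≤d} for every d ∈ ℕ₀, and let A be a linear map on ℝ[x₁,…,xₙ] with A(ℝ[x₁,…,xₙ]_{≤d}) ⊆ ℝ[x₁,…,xₙ]_{≤d} for all d. If for every d ∈ ℕ₀ there exists ε_d > 0 such that (id + λA)(C_d) ⊆ C_d for all λ ∈ [0, ε_d), then e^{tA}C ⊆ C for all t ≥ 0. -/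
open MeasureTheory MvPolynomial Filter Topology

section Helper

set_option maxHeartbeats 1000000

open Filter Topology NormedSpace
open scoped Nat

section BanachExp

variable {𝔸 : Type*} [NormedRing 𝔸] [NormOneClass 𝔸] [NormedAlgebra ℝ 𝔸] [CompleteSpace 𝔸]

omit [NormedAlgebra ℝ 𝔸] [CompleteSpace 𝔸] in
lemma my_norm_pow_sub_pow (a b : 𝔸) (M : ℝ) (ha : ‖a‖ ≤ M) (hb : ‖b‖ ≤ M) (hM : 1 ≤ M) (k : ℕ) :
    ‖a ^ k - b ^ k‖ ≤ k * M ^ k * ‖a - b‖ := by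
  have h0M : (0:ℝ) ≤ M := le_trans zero_le_one hM
  induction k with
  | zero => simp
  | succ k ih =>
    have hid : a ^ (k+1) - b ^ (k+1) = a * (a ^ k - b ^ k) + (a - b) * b ^ k := by
      rw [mul_sub, sub_mul, pow_succ', pow_succ']; abel
    have hMk : ‖b ^ k‖ ≤ M ^ k :=
      (norm_pow_le b k).trans (pow_le_pow_left₀ (norm_nonneg b) hb k)
    calc ‖a ^ (k+1) - b ^ (k+1)‖ ≤ ‖a * (a ^ k - b ^ k)‖ + ‖(a - b) * b ^ k‖ := by
          rw [hid]; exact norm_add_le _ _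
    _ ≤ ‖a‖ * ‖a ^ k - b ^ k‖ + ‖a - b‖ * ‖b ^ k‖ :=
          add_le_add (norm_mul_le _ _) (norm_mul_le _ _)
    _ ≤ M * (k * M ^ k * ‖a - b‖) + ‖a - b‖ * M ^ k := by
          refine add_le_add (mul_le_mul ha ih (norm_nonneg _) h0M)
            (mul_le_mul_of_nonneg_left hMk (norm_nonneg _))
    _ ≤ (k+1 : ℕ) * M ^ (k+1) * ‖a - b‖ := by
          have h1 : M ^ k ≤ M ^ (k+1) := pow_le_pow_right₀ hM (Nat.le_succ k)
          have h2 : ‖a - b‖ * M ^ k ≤ ‖a - b‖ * M ^ (k+1) :=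
            mul_le_mul_of_nonneg_left h1 (norm_nonneg _)
          have h3 : M * (↑k * M ^ k * ‖a - b‖) = ↑k * M ^ (k+1) * ‖a - b‖ := by ring
          push_cast
          nlinarith [h2, h3]

lemma my_norm_exp_le (x : 𝔸) : ‖exp x‖ ≤ Real.exp ‖x‖ := by
  rw [exp_eq_tsum ℝ]
  have h1 : ‖(∑' n : ℕ, (n !⁻¹ : ℝ) • x ^ n)‖ ≤ ∑' n : ℕ, ‖(n !⁻¹ : ℝ) • x ^ n‖ :=
    norm_tsum_le_tsum_norm (norm_expSeries_summable' x)
  have h2 : ∑' n : ℕ, ‖(n !⁻¹ : ℝ) • x ^ n‖ ≤ ∑' n : ℕ, ‖x‖ ^ n / n ! := by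
    refine Summable.tsum_le_tsum ?_ (norm_expSeries_summable' x) (Real.summable_pow_div_factorial ‖x‖)
    intro n
    rw [norm_smul, norm_inv, RCLike.norm_natCast, div_eq_inv_mul]
    exact mul_le_mul_of_nonneg_left (norm_pow_le x n) (by positivity)
  have h3 : ∑' n : ℕ, ‖x‖ ^ n / n ! = Real.exp ‖x‖ := by
    rw [Real.exp_eq_exp_ℝ, exp_eq_tsum_div]
  linarith

lemma my_norm_exp_sub_one_sub (x : 𝔸) :
    ‖exp x - 1 - x‖ ≤ ‖x‖ ^ 2 * Real.exp ‖x‖ := by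
  have hs : Summable (fun n : ℕ => (n !⁻¹ : ℝ) • x ^ n) := expSeries_summable' x
  have hs1 : Summable (fun n : ℕ => ((n+1)!⁻¹ : ℝ) • x ^ (n+1)) :=
    (summable_nat_add_iff 1).2 hs
  have hs2 : Summable (fun n : ℕ => ((n+2)!⁻¹ : ℝ) • x ^ (n+2)) :=
    (summable_nat_add_iff 2).2 hs
  have hns : Summable (fun n : ℕ => ‖(n !⁻¹ : ℝ) • x ^ n‖) := norm_expSeries_summable' x
  have hns2 : Summable (fun n : ℕ => ‖((n+2)!⁻¹ : ℝ) • x ^ (n+2)‖) :=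
    (summable_nat_add_iff 2).2 hns
  have key : exp x - 1 - x = ∑' n : ℕ, ((n+2)!⁻¹ : ℝ) • x ^ (n+2) := by
    rw [exp_eq_tsum ℝ]
    beta_reduce
    rw [Summable.tsum_eq_zero_add hs, Summable.tsum_eq_zero_add hs1]
    simp [Nat.factorial]
  rw [key]
  have hb : ∀ n : ℕ, ‖((n+2)!⁻¹ : ℝ) • x ^ (n+2)‖ ≤ ‖x‖ ^ 2 * (‖x‖ ^ n / n !) := by
    intro n
    rw [norm_smul, norm_inv, RCLike.norm_natCast]
    have h1 : ‖x ^ (n+2)‖ ≤ ‖x‖ ^ (n+2) := norm_pow_le x (n+2)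
    have h2 : (((n+2)! : ℝ))⁻¹ ≤ ((n ! : ℝ))⁻¹ := by
      apply inv_anti₀
      · positivity
      · exact_mod_cast Nat.factorial_le (by omega)
    calc (((n+2)! : ℝ))⁻¹ * ‖x ^ (n+2)‖ ≤ ((n ! : ℝ))⁻¹ * ‖x‖ ^ (n+2) :=
          mul_le_mul h2 h1 (norm_nonneg _) (by positivity)
    _ = ‖x‖ ^ 2 * (‖x‖ ^ n / n !) := by rw [pow_add]; ring
  have hsb : Summable (fun n : ℕ => ‖x‖ ^ 2 * (‖x‖ ^ n / n !)) :=
    (Real.summable_pow_div_factorial ‖x‖).mul_left _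
  calc ‖(∑' n : ℕ, ((n+2)!⁻¹ : ℝ) • x ^ (n+2))‖
      ≤ ∑' n : ℕ, ‖((n+2)!⁻¹ : ℝ) • x ^ (n+2)‖ := norm_tsum_le_tsum_norm hns2
  _ ≤ ∑' n : ℕ, ‖x‖ ^ 2 * (‖x‖ ^ n / n !) := Summable.tsum_le_tsum hb hns2 hsb
  _ = ‖x‖ ^ 2 * ∑' n : ℕ, ‖x‖ ^ n / n ! := tsum_mul_left
  _ = ‖x‖ ^ 2 * Real.exp ‖x‖ := by rw [Real.exp_eq_exp_ℝ, exp_eq_tsum_div]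



lemma my_tendsto_one_add_smul_pow (x : 𝔸) :
    Tendsto (fun k : ℕ => (1 + (k:ℝ)⁻¹ • x) ^ k) atTop (𝓝 (exp x)) := by
  rw [← tendsto_sub_nhds_zero_iff]
  refine squeeze_zero_norm' ?_
    (tendsto_const_div_atTop_nhds_zero_nat (‖x‖ ^ 2 * Real.exp ‖x‖ * Real.exp ‖x‖))
  filter_upwards [eventually_ge_atTop 1] with k hk
  have hk0 : (0:ℝ) < k := by exact_mod_cast hk
  set y := (k:ℝ)⁻¹ • x with hy
  have hny : ‖y‖ = (k:ℝ)⁻¹ * ‖x‖ := by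
    rw [hy, norm_smul, norm_inv, Real.norm_natCast]
  have hinv1 : (k:ℝ)⁻¹ ≤ 1 := by
    rw [inv_le_one_iff₀]; right; exact_mod_cast hk
  have hyx : ‖y‖ ≤ ‖x‖ := by
    rw [hny]; exact mul_le_of_le_one_left (norm_nonneg x) hinv1
  have hksmul : (k : ℕ) • y = x := by
    rw [hy, ← Nat.cast_smul_eq_nsmul ℝ, smul_smul, mul_inv_cancel₀ (ne_of_gt hk0), one_smul]
  have hexp : exp x = (exp y) ^ k := by
    letI : NormedAlgebra ℚ 𝔸 := NormedAlgebra.restrictScalars ℚ ℝ 𝔸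
    rw [← exp_nsmul, hksmul]
  set M := Real.exp ((k:ℝ)⁻¹ * ‖x‖) with hM
  have hM1 : 1 ≤ M := Real.one_le_exp (by positivity)
  have ha : ‖exp y‖ ≤ M := by rw [hM, ← hny]; exact my_norm_exp_le y
  have hb : ‖1 + y‖ ≤ M := by
    calc ‖1 + y‖ ≤ ‖(1:𝔸)‖ + ‖y‖ := norm_add_le _ _
    _ = ‖y‖ + 1 := by rw [norm_one]; ring
    _ ≤ M := by rw [hM, ← hny]; exact Real.add_one_le_exp ‖y‖
  have hMk : M ^ k = Real.exp ‖x‖ := by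
    rw [hM, ← Real.exp_nat_mul]
    congr 1
    field_simp
  have hd : ‖exp y - (1 + y)‖ ≤ ((k:ℝ)⁻¹ * ‖x‖) ^ 2 * Real.exp ‖x‖ := by
    have h1 : exp y - (1 + y) = exp y - 1 - y := sub_add_eq_sub_sub _ _ _
    rw [h1, ← hny]
    exact (my_norm_exp_sub_one_sub y).trans
      (mul_le_mul_of_nonneg_left (Real.exp_le_exp.2 hyx) (by positivity))
  have hmain : ‖(exp y) ^ k - (1 + y) ^ k‖ ≤ k * M ^ k * ‖exp y - (1 + y)‖ :=
    my_norm_pow_sub_pow _ _ M ha hb hM1 k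
  have hfinal : ‖(1 + y) ^ k - exp x‖ ≤ (‖x‖ ^ 2 * Real.exp ‖x‖ * Real.exp ‖x‖) / k := by
    rw [hexp, ← norm_neg, neg_sub]
    calc ‖(exp y) ^ k - (1 + y) ^ k‖ ≤ k * M ^ k * ‖exp y - (1 + y)‖ := hmain
    _ ≤ k * M ^ k * (((k:ℝ)⁻¹ * ‖x‖) ^ 2 * Real.exp ‖x‖) := by
        apply mul_le_mul_of_nonneg_left hd
        positivity
    _ = (‖x‖ ^ 2 * Real.exp ‖x‖ * Real.exp ‖x‖) / k := by
        rw [hMk]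
        field_simp
  exact hfinal

end BanachExp


open NormedSpace in
lemma expEnd_tendsto {M : Type*} [AddCommGroup M] [Module ℝ M] [FiniteDimensional ℝ M]
    [Nontrivial M] (f : M →ₗ[ℝ] M) (v : M) (l : M →ₗ[ℝ] ℝ) :
    Tendsto (fun k : ℕ => l (((1 + (k:ℝ)⁻¹ • f) ^ k) v)) atTop
      (𝓝 (l (expEnd f v))) := by
  unfold expEnd
  letI : DecidableEq (Module.Basis.ofVectorSpaceIndex ℝ M) := Classical.decEq _
  set b := Module.Basis.ofVectorSpace ℝ M with hb
  haveI : Nonempty (Module.Basis.ofVectorSpaceIndex ℝ M) := Module.Basis.index_nonempty b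
  letI instNR : NormedRing (Matrix (Module.Basis.ofVectorSpaceIndex ℝ M) (Module.Basis.ofVectorSpaceIndex ℝ M) ℝ) :=
    Matrix.linftyOpNormedRing
  letI instNA : NormedAlgebra ℝ (Matrix (Module.Basis.ofVectorSpaceIndex ℝ M) (Module.Basis.ofVectorSpaceIndex ℝ M) ℝ) :=
    Matrix.linftyOpNormedAlgebra
  letI instNO : NormOneClass (Matrix (Module.Basis.ofVectorSpaceIndex ℝ M) (Module.Basis.ofVectorSpaceIndex ℝ M) ℝ) :=
    Matrix.linfty_opNormOneClass
  letI : CompleteSpace (Matrix (Module.Basis.ofVectorSpaceIndex ℝ M) (Module.Basis.ofVectorSpaceIndex ℝ M) ℝ) :=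
    FiniteDimensional.complete ℝ _
  set X := LinearMap.toMatrix b b f with hX
  have htoLin_pow : ∀ (N : Matrix (Module.Basis.ofVectorSpaceIndex ℝ M) (Module.Basis.ofVectorSpaceIndex ℝ M) ℝ)
      (k : ℕ), Matrix.toLin b b (N ^ k) = (Matrix.toLin b b N) ^ k := by
    intro N k
    induction k with
    | zero => rw [pow_zero, pow_zero, Matrix.toLin_one]; rfl
    | succ k ih => rw [pow_succ, pow_succ, Matrix.toLin_mul b b b, ih]; rfl
  set lmat : (Matrix (Module.Basis.ofVectorSpaceIndex ℝ M) (Module.Basis.ofVectorSpaceIndex ℝ M) ℝ) →ₗ[ℝ] ℝ :=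
    l ∘ₗ (LinearMap.applyₗ v) ∘ₗ (Matrix.toLin b b).toLinearMap with hlmat
  have hcont : Continuous lmat := lmat.continuous_of_finiteDimensional
  have hkey : ∀ k : ℕ, lmat ((1 + (k:ℝ)⁻¹ • X) ^ k) = l (((1 + (k:ℝ)⁻¹ • f) ^ k) v) := by
    intro k
    have h1 : Matrix.toLin b b (1 + (k:ℝ)⁻¹ • X) = 1 + (k:ℝ)⁻¹ • f := by
      rw [map_add, _root_.map_smul, Matrix.toLin_one, Matrix.toLin_toMatrix]
      rfl
    simp only [hlmat, LinearMap.comp_apply, LinearEquiv.coe_coe, htoLin_pow, h1]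
    rfl
  have hmain := (hcont.tendsto _).comp (my_tendsto_one_add_smul_pow X)
  simp only [Function.comp_def, hkey] at hmain
  convert hmain using 2
  rfl


end Helper

/-- The coefficient function of a multivariate polynomial (used to express closedness of
subsets of the finite-dimensional spaces `ℝ[x₁,…,xₙ]_{≤d}` via the coefficient topology). -/
def coeffsMap (n : ℕ) (p : MvPolynomial (Fin n) ℝ) : (Fin n →₀ ℕ) → ℝ :=
  fun β => MvPolynomial.coeff β p

/-- Proposition `1plusAd`: if for every `d` there is `ε_d > 0` with
`(id + λA)(C_d) ⊆ C_d` for all `λ ∈ [0, ε_d)`, then `e^{tA}C ⊆ C` for all `t ≥ 0`. -/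
theorem stmt14 (n : ℕ) (hn : 1 ≤ n) (C : Set (MvPolynomial (Fin n) ℝ)) (hCne : C.Nonempty)
    (hCconv : Convex ℝ C)
    (hCcl : ∀ d : ℕ, IsClosed (coeffsMap n ''
      (C ∩ (MvPolynomial.restrictTotalDegree (Fin n) ℝ d : Set (MvPolynomial (Fin n) ℝ)))))
    (A : MvPolynomial (Fin n) ℝ →ₗ[ℝ] MvPolynomial (Fin n) ℝ)
    (hAfil : ∀ d : ℕ, ∀ p ∈ MvPolynomial.restrictTotalDegree (Fin n) ℝ d,
      A p ∈ MvPolynomial.restrictTotalDegree (Fin n) ℝ d)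
    (hres : ∀ d : ℕ, ∃ ε : ℝ, 0 < ε ∧ ∀ lam : ℝ, 0 ≤ lam → lam < ε →
      ∀ p ∈ MvPolynomial.restrictTotalDegree (Fin n) ℝ d, p ∈ C → p + lam • A p ∈ C) :
    ∀ t : ℝ, 0 ≤ t → ∀ d : ℕ, ∀ p : MvPolynomial (Fin n) ℝ,
      ∀ hp : p ∈ MvPolynomial.restrictTotalDegree (Fin n) ℝ d, p ∈ C →
        ((expEnd (t • (A.restrict (hAfil d))) ⟨p, hp⟩ :
          MvPolynomial.restrictTotalDegree (Fin n) ℝ d) : MvPolynomial (Fin n) ℝ) ∈ C := by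
  intro t ht d p hp hpC
  classical
  obtain ⟨ε, hε, hεC⟩ := hres d
  set V := MvPolynomial.restrictTotalDegree (Fin n) ℝ d with hVdef
  haveI : Nontrivial V := by
    refine ⟨⟨(1 : MvPolynomial (Fin n) ℝ), ?_⟩, 0, ?_⟩
    · rw [MvPolynomial.mem_restrictTotalDegree]
      simp
    · intro h
      have := congrArg (Subtype.val) h
      simpa using this
  set B := A.restrict (hAfil d) with hBdef
  set v : V := ⟨p, hp⟩ with hvdef
  have hiter : ∀ lam : ℝ, 0 ≤ lam → lam < ε → ∀ k : ℕ,
      ((((1 + lam • B) ^ k) v : V) : MvPolynomial (Fin n) ℝ) ∈ C := by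
    intro lam h0 h1 k
    induction k with
    | zero => simpa using hpC
    | succ k ih =>
      rw [pow_succ']
      have happ : (((1 + lam • B) * (1 + lam • B) ^ k) v : V)
          = (1 + lam • B) (((1 + lam • B) ^ k) v) := rfl
      rw [happ]
      set w : V := ((1 + lam • B) ^ k) v with hw
      have hcoe : (((1 + lam • B) w : V) : MvPolynomial (Fin n) ℝ)
          = (w : MvPolynomial (Fin n) ℝ) + lam • A (w : MvPolynomial (Fin n) ℝ) := by
        have h2 : (1 + lam • B) w = w + lam • B w := by
          simp [LinearMap.add_apply]
        rw [h2]
        push_cast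
        rw [LinearMap.restrict_coe_apply]
      rw [hcoe]
      exact hεC lam h0 h1 _ w.2 ih
  have htend : Tendsto (fun k : ℕ =>
      coeffsMap n ((((1 + (k:ℝ)⁻¹ • (t • B)) ^ k) v : V) : MvPolynomial (Fin n) ℝ)) atTop
      (𝓝 (coeffsMap n ((expEnd (t • B) v : V) : MvPolynomial (Fin n) ℝ))) := by
    rw [tendsto_pi_nhds]
    intro β
    have := expEnd_tendsto (t • B) v ((MvPolynomial.lcoeff ℝ β).comp V.subtype)
    simpa [coeffsMap, MvPolynomial.lcoeff] using this
  have h0t : Tendsto (fun k : ℕ => (k:ℝ)⁻¹ * t) atTop (𝓝 0) := by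
    simpa using (tendsto_inv_atTop_nhds_zero_nat (𝕜 := ℝ)).mul_const t
  have hev0 : ∀ᶠ k : ℕ in atTop, (k:ℝ)⁻¹ * t < ε := h0t.eventually_lt_const hε
  have hev : ∀ᶠ k : ℕ in atTop,
      coeffsMap n ((((1 + (k:ℝ)⁻¹ • (t • B)) ^ k) v : V) : MvPolynomial (Fin n) ℝ)
        ∈ coeffsMap n '' (C ∩ (V : Set (MvPolynomial (Fin n) ℝ))) := by
    filter_upwards [hev0] with k hk
    have h0 : (0:ℝ) ≤ (k:ℝ)⁻¹ * t := by positivity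
    have hsm : (k:ℝ)⁻¹ • (t • B) = ((k:ℝ)⁻¹ * t) • B := smul_smul _ _ _
    refine ⟨_, ⟨?_, ?_⟩, rfl⟩
    · rw [hsm]
      exact hiter _ h0 hk k
    · exact ((((1 + (k:ℝ)⁻¹ • (t • B)) ^ k) v : V)).2
  have hmem := (hCcl d).mem_of_tendsto htend hev
  obtain ⟨r, ⟨hrC, hrV⟩, hr⟩ := hmem
  have hreq : r = ((expEnd (t • B) v : V) : MvPolynomial (Fin n) ℝ) := by
    apply MvPolynomial.ext
    intro m
    exact congrFun hr m
  rw [← hreq]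
  exact hrC
end

section
/- Let n ≥ 1, let K ⊆ ℝⁿ be a nonempty closed set, and let A = Σ_α (a_α/α!)·∂^α be a linear map on ℝ[x₁,…,xₙ] with a_α ∈ ℝ[x₁,…,xₙ] and deg a_α ≤ |α| for all α ∈ ℕ₀ⁿ. For y ∈ ℝⁿ let A_y := Σ_α (a_α(y)/α!)·∂^α be the constant-coefficient operator obtained by evaluating the coefficients at y. If for every y ∈ K and every t ≥ 0 the operator e^{tA_y} maps Pos(K) into Pos(K), then e^{tA} maps Pos(K) into Pos(K) for every t ≥ 0. -/
open MeasureTheory MvPolynomial Filter Topology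

section ExpEnd
variable {M : Type*} [AddCommGroup M] [Module ℝ M] [FiniteDimensional ℝ M]

attribute [local instance] Matrix.linftyOpNormedRing Matrix.linftyOpNormedAlgebra

theorem expEnd_zero_smul (f : M →ₗ[ℝ] M) (v : M) : expEnd ((0:ℝ) • f) v = v := by
  letI : DecidableEq (Module.Basis.ofVectorSpaceIndex ℝ M) := Classical.decEq _
  rw [zero_smul]
  unfold expEnd
  rw [map_zero, NormedSpace.exp_zero, Matrix.toLin_one, LinearMap.id_apply]

theorem hasDerivAt_expEnd (f : M →ₗ[ℝ] M) (v : M) (φ : M →ₗ[ℝ] ℝ) (t : ℝ) :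
    HasDerivAt (fun s : ℝ => φ (expEnd (s • f) v)) (φ (f (expEnd (t • f) v))) t := by
  letI : DecidableEq (Module.Basis.ofVectorSpaceIndex ℝ M) := Classical.decEq _
  set b := Module.Basis.ofVectorSpace ℝ M with hb
  set X := LinearMap.toMatrix b b f with hX
  have hexp : ∀ s : ℝ, expEnd (s • f) = Matrix.toLin b b (NormedSpace.exp (s • X)) := by
    intro s
    unfold expEnd
    rw [_root_.map_smul]
  have hf : Matrix.toLin b b X = f := Matrix.toLin_toMatrix b b f
  let F₀ : Matrix (Module.Basis.ofVectorSpaceIndex ℝ M) (Module.Basis.ofVectorSpaceIndex ℝ M) ℝ →ₗ[ℝ] ℝ :=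
    φ ∘ₗ (LinearMap.applyₗ v) ∘ₗ (Matrix.toLin b b).toLinearMap
  let F := LinearMap.toContinuousLinearMap F₀
  have h := hasDerivAt_exp_smul_const' (𝕂 := ℝ) X t
  have h2 := F.hasFDerivAt.comp_hasDerivAt t h
  have hFval : ∀ Z, F Z = φ ((Matrix.toLin b b Z) v) := fun Z => rfl
  have key : ∀ s : ℝ, φ (expEnd (s • f) v) = F (NormedSpace.exp (s • X)) := by
    intro s; rw [hexp s, hFval]
  have keyd : F (X * NormedSpace.exp (t • X)) = φ (f (expEnd (t • f) v)) := by
    rw [hFval, Matrix.toLin_mul b b b, LinearMap.comp_apply, hf, hexp t]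
  rw [← keyd]
  exact h2.congr_deriv rfl |>.congr_of_eventuallyEq (Eventually.of_forall fun s => (key s))

section Degree
variable {n : ℕ}

lemma support_pderiv_mem {i : Fin n} {p : MvPolynomial (Fin n) ℝ} {β : Fin n →₀ ℕ}
    (hβ : β ∈ (pderiv i p).support) :
    β + Finsupp.single i 1 ∈ p.support := by
  classical
  rw [MvPolynomial.mem_support_iff] at hβ ⊢
  have hrw : pderiv i p = ∑ v ∈ p.support, monomial (v - Finsupp.single i 1)
      (coeff v p * ((v i : ℕ) : ℝ)) := by
    conv_lhs => rw [MvPolynomial.as_sum p]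
    rw [map_sum]
    exact Finset.sum_congr rfl fun v _ => by rw [pderiv_monomial]
  rw [hrw, MvPolynomial.coeff_sum] at hβ
  obtain ⟨v, hv, hne⟩ := Finset.exists_ne_zero_of_sum_ne_zero hβ
  rw [MvPolynomial.coeff_monomial] at hne
  rcases eq_or_ne (v - Finsupp.single i 1) β with hβv | hβv
  · rw [if_pos hβv] at hne
    replace hβv : β = v - Finsupp.single i 1 := hβv.symm
    have h1 : coeff v p ≠ 0 := fun h => hne (by rw [h, zero_mul])
    have h2 : v i ≠ 0 := fun h => hne (by rw [h]; norm_num)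
    have hle : Finsupp.single i 1 ≤ v := by
      rw [Finsupp.single_le_iff]; exact Nat.one_le_iff_ne_zero.mpr h2
    have hv' : β + Finsupp.single i 1 = v := by
      rw [hβv, tsub_add_cancel_of_le hle]
    rw [hv']; exact h1
  · exact absurd (if_neg hβv) hne

lemma totalDegree_pderiv_succ_le {i : Fin n} {p : MvPolynomial (Fin n) ℝ}
    (h : pderiv i p ≠ 0) : (pderiv i p).totalDegree + 1 ≤ p.totalDegree := by
  obtain ⟨β, hβ, hsup⟩ := Finset.exists_mem_eq_sup (pderiv i p).support
    (by rw [Finset.nonempty_iff_ne_empty]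
        exact fun hc => h (MvPolynomial.support_eq_empty.mp hc))
    (fun s => s.sum fun _ e => e)
  have hmem := support_pderiv_mem hβ
  have hsum : ((β + Finsupp.single i 1).sum fun _ e => e) ≤ p.totalDegree :=
    MvPolynomial.le_totalDegree hmem
  rw [Finsupp.sum_add_index (by simp) (by simp)] at hsum
  simp only [Finsupp.sum_single_index] at hsum
  rw [MvPolynomial.totalDegree, hsup]
  omega

/-- "cost" property of an operator. -/
def GoodOp (n : ℕ) (f : Module.End ℝ (MvPolynomial (Fin n) ℝ)) (k : ℕ) : Prop :=
  ∀ q : MvPolynomial (Fin n) ℝ, f q ≠ 0 → (f q).totalDegree + k ≤ q.totalDegree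

lemma goodOp_mul {f g : Module.End ℝ (MvPolynomial (Fin n) ℝ)} {j k : ℕ}
    (hf : GoodOp n f j) (hg : GoodOp n g k) : GoodOp n (f * g) (j + k) := by
  intro q hq
  have hg0 : g q ≠ 0 := by
    intro h; apply hq; show f (g q) = 0; rw [h, map_zero]
  have h1 := hf (g q) hq
  have h2 := hg q hg0
  have : (f * g) q = f (g q) := rfl
  rw [this]
  omega

lemma goodOp_pderiv (i : Fin n) :
    GoodOp n ((pderiv i).toLinearMap : Module.End ℝ (MvPolynomial (Fin n) ℝ)) 1 :=
  fun q hq => totalDegree_pderiv_succ_le hq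

lemma goodOp_pow {f : Module.End ℝ (MvPolynomial (Fin n) ℝ)} {k : ℕ}
    (hf : GoodOp n f k) (m : ℕ) : GoodOp n (f ^ m) (m * k) := by
  induction m with
  | zero => intro q _; simpa using le_refl _
  | succ m ih =>
      have := goodOp_mul hf ih
      rw [pow_succ]
      have h2 : GoodOp n (f * f ^ m) (k + m * k) := this
      have : f ^ m * f = f * f ^ m := by
        rw [← pow_succ, ← pow_succ']
      rw [this]
      convert h2 using 1
      ring

lemma goodOp_listProd : ∀ (L : List (Module.End ℝ (MvPolynomial (Fin n) ℝ) × ℕ)),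
    (∀ x ∈ L, GoodOp n x.1 x.2) → GoodOp n (L.map Prod.fst).prod (L.map Prod.snd).sum := by
  intro L
  induction L with
  | nil => intro _ q _; simpa using le_refl _
  | cons x L ih =>
      intro h
      simp only [List.map_cons, List.prod_cons, List.sum_cons]
      exact goodOp_mul (h x (by simp)) (ih fun y hy => h y (List.mem_cons_of_mem _ hy))

lemma goodOp_pd (α : Fin n →₀ ℕ) : GoodOp n (pd n α) (∑ i, α i) := by
  have := goodOp_listProd (List.ofFn fun i : Fin n =>
    ((((pderiv i).toLinearMap : Module.End ℝ (MvPolynomial (Fin n) ℝ)) ^ (α i)), α i))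
    (by
      intro x hx
      rw [List.mem_ofFn] at hx
      obtain ⟨i, rfl⟩ := hx
      simpa using goodOp_pow (goodOp_pderiv i) (α i))
  simp only [List.map_ofFn] at this
  have h1 : (List.ofFn fun i : Fin n => (Prod.fst ∘ fun i =>
      ((((pderiv i).toLinearMap : Module.End ℝ (MvPolynomial (Fin n) ℝ)) ^ (α i)), α i)) i) =
      List.ofFn fun i : Fin n =>
      (((pderiv i).toLinearMap : Module.End ℝ (MvPolynomial (Fin n) ℝ)) ^ (α i)) := rfl
  have h2 : (List.ofFn fun i : Fin n => (Prod.snd ∘ fun i =>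
      ((((pderiv i).toLinearMap : Module.End ℝ (MvPolynomial (Fin n) ℝ)) ^ (α i)), α i)) i).sum
      = ∑ i, α i := by
    rw [List.sum_ofFn]; rfl
  rw [h1, h2] at this
  exact this

lemma pd_sum_le {α : Fin n →₀ ℕ} {q : MvPolynomial (Fin n) ℝ} (h : pd n α q ≠ 0) :
    (∑ i, α i) ≤ q.totalDegree := by
  have := goodOp_pd α q h
  omega

lemma pd_totalDegree_le {α : Fin n →₀ ℕ} {q : MvPolynomial (Fin n) ℝ} :
    (pd n α q).totalDegree ≤ q.totalDegree := by
  by_cases h : pd n α q = 0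
  · simp [h]
  · have := goodOp_pd α q h; omega

lemma pd_support_finite (q : MvPolynomial (Fin n) ℝ) :
    {α : Fin n →₀ ℕ | pd n α q ≠ 0}.Finite := by
  classical
  apply Set.Finite.subset (Finset.Iic
    (Finsupp.equivFunOnFinite.symm fun _ : Fin n => q.totalDegree)).finite_toSet
  intro α hα
  simp only [Finset.coe_Iic, Set.mem_Iic]
  intro i
  have h1 : α i ≤ ∑ j, α j := Finset.single_le_sum (f := fun j => α j) (fun _ _ => Nat.zero_le _)
    (Finset.mem_univ i)
  have h2 := pd_sum_le hα
  simpa using le_trans h1 h2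

end Degree

section EvalBound
variable {n : ℕ}

/-- evaluation as a linear map -/
noncomputable def evalLM (x : Fin n → ℝ) : MvPolynomial (Fin n) ℝ →ₗ[ℝ] ℝ where
  toFun q := eval x q
  map_add' a b := by simp
  map_smul' c q := by
    simp only [MvPolynomial.smul_eq_C_mul, map_mul, eval_C, RingHom.id_apply, smul_eq_mul]

@[simp] lemma evalLM_apply (x : Fin n → ℝ) (q : MvPolynomial (Fin n) ℝ) :
    evalLM x q = eval x q := rfl

/-- coefficient extraction as a linear map -/
noncomputable def coeffLM (β : Fin n →₀ ℕ) : MvPolynomial (Fin n) ℝ →ₗ[ℝ] ℝ where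
  toFun q := coeff β q
  map_add' a b := by simp
  map_smul' c q := by simp

@[simp] lemma coeffLM_apply (β : Fin n →₀ ℕ) (q : MvPolynomial (Fin n) ℝ) :
    coeffLM β q = coeff β q := rfl

lemma monomial_abs_le (x : Fin n → ℝ) (β : Fin n →₀ ℕ) {m : ℕ}
    (hβ : (β.sum fun _ e => e) ≤ 2 * m) :
    |∏ i ∈ β.support, x i ^ β i| ≤ (1 + ∑ i, x i ^ 2) ^ m := by
  set S : ℝ := ∑ i, x i ^ 2 with hS
  have hS0 : 0 ≤ S := Finset.sum_nonneg fun i _ => sq_nonneg _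
  have hS1 : (1:ℝ) ≤ 1 + S := by linarith
  have hxi : ∀ i, |x i| ≤ Real.sqrt (1 + S) := by
    intro i
    have h1 : x i ^ 2 ≤ S := Finset.single_le_sum (f := fun j => x j ^ 2)
      (fun j _ => sq_nonneg _) (Finset.mem_univ i)
    have := Real.sqrt_le_sqrt (le_trans h1 (by linarith : S ≤ 1 + S))
    rwa [Real.sqrt_sq_eq_abs] at this
  have hsq1 : (1:ℝ) ≤ Real.sqrt (1 + S) := by
    have := Real.sqrt_le_sqrt hS1
    simpa using this
  calc |∏ i ∈ β.support, x i ^ β i| = ∏ i ∈ β.support, |x i| ^ β i := by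
        rw [Finset.abs_prod]; exact Finset.prod_congr rfl fun i _ => by rw [abs_pow]
    _ ≤ ∏ i ∈ β.support, Real.sqrt (1 + S) ^ β i := by
        apply Finset.prod_le_prod
        · intro i _; positivity
        · intro i _; exact pow_le_pow_left₀ (abs_nonneg _) (hxi i) _
    _ = Real.sqrt (1 + S) ^ (β.sum fun _ e => e) := by
        rw [Finset.prod_pow_eq_pow_sum]
        rfl
    _ ≤ Real.sqrt (1 + S) ^ (2 * m) := pow_le_pow_right₀ hsq1 hβ
    _ = (1 + S) ^ m := by
        rw [pow_mul, Real.sq_sqrt (by linarith)]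

lemma eval_abs_le {m : ℕ} {q : MvPolynomial (Fin n) ℝ} (hq : q.totalDegree ≤ 2 * m)
    (x : Fin n → ℝ) :
    |eval x q| ≤ (∑ β ∈ q.support, |coeff β q|) * (1 + ∑ i, x i ^ 2) ^ m := by
  rw [MvPolynomial.eval_eq]
  calc |∑ β ∈ q.support, coeff β q * ∏ i ∈ β.support, x i ^ β i|
      ≤ ∑ β ∈ q.support, |coeff β q * ∏ i ∈ β.support, x i ^ β i| :=
        Finset.abs_sum_le_sum_abs _ _
    _ ≤ ∑ β ∈ q.support, |coeff β q| * (1 + ∑ i, x i ^ 2) ^ m := by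
        apply Finset.sum_le_sum
        intro β hβ
        rw [abs_mul]
        exact mul_le_mul_of_nonneg_left
          (monomial_abs_le x β (le_trans (MvPolynomial.le_totalDegree hβ) hq)) (abs_nonneg _)
    _ = (∑ β ∈ q.support, |coeff β q|) * (1 + ∑ i, x i ^ 2) ^ m := by
        rw [Finset.sum_mul]

/-- the barrier polynomial -/
noncomputable def wB (n m : ℕ) : MvPolynomial (Fin n) ℝ :=
  (1 + ∑ i : Fin n, X i ^ 2) ^ m

lemma eval_wB (m : ℕ) (x : Fin n → ℝ) :
    eval x (wB n m) = (1 + ∑ i, x i ^ 2) ^ m := by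
  simp [wB]

lemma one_le_eval_wB (m : ℕ) (x : Fin n → ℝ) : 1 ≤ eval x (wB n m) := by
  rw [eval_wB]
  have h0 : (0:ℝ) ≤ ∑ i, x i ^ 2 := Finset.sum_nonneg fun i _ => sq_nonneg _
  exact one_le_pow₀ (by linarith : (1:ℝ) ≤ 1 + ∑ i, x i ^ 2)

lemma totalDegree_wB (m : ℕ) : (wB n m).totalDegree ≤ 2 * m := by
  have h1 : (1 + ∑ i : Fin n, X i ^ 2 : MvPolynomial (Fin n) ℝ).totalDegree ≤ 2 := by
    apply le_trans (MvPolynomial.totalDegree_add _ _)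
    simp only [MvPolynomial.totalDegree_one, zero_le, max_le_iff, true_and]
    apply le_trans (MvPolynomial.totalDegree_finset_sum _ _)
    apply Finset.sup_le
    intro i _
    apply le_trans (MvPolynomial.totalDegree_pow _ _)
    simp [MvPolynomial.totalDegree_X]
  calc (wB n m).totalDegree ≤ m * (1 + ∑ i : Fin n, X i ^ 2 : MvPolynomial (Fin n) ℝ).totalDegree :=
        MvPolynomial.totalDegree_pow _ _
    _ ≤ m * 2 := Nat.mul_le_mul_left m h1
    _ = 2 * m := Nat.mul_comm m 2

end EvalBound

lemma deriv_nonneg_at_zero {g : ℝ → ℝ} {g' : ℝ} (h0 : g 0 = 0)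
    (hpos : ∀ s : ℝ, 0 ≤ s → 0 ≤ g s) (hd : HasDerivAt g g' 0) : 0 ≤ g' := by
  have ht := hasDerivAt_iff_tendsto_slope.mp hd
  have ht2 : Tendsto (slope g 0) (𝓝[>] (0:ℝ)) (𝓝 g') :=
    ht.mono_left (nhdsWithin_mono _ (fun x hx => ne_of_gt hx))
  refine ge_of_tendsto ht2 ?_
  filter_upwards [self_mem_nhdsWithin] with s hs
  rw [slope_def_field]
  have hs' : 0 < s := hs
  rw [h0]
  apply div_nonneg (by simpa using hpos s hs'.le) (by simpa using hs'.le)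

lemma deriv_nonpos_at_left {g : ℝ → ℝ} {g' t₀ : ℝ} (ht : 0 < t₀) (h0 : g t₀ = 0)
    (hpos : ∀ s : ℝ, 0 ≤ s → s < t₀ → 0 ≤ g s) (hd : HasDerivAt g g' t₀) : g' ≤ 0 := by
  have ht' := hasDerivAt_iff_tendsto_slope.mp hd
  have ht2 : Tendsto (slope g t₀) (𝓝[<] t₀) (𝓝 g') :=
    ht'.mono_left (nhdsWithin_mono _ (fun x hx => ne_of_lt hx))
  refine le_of_tendsto ht2 ?_
  filter_upwards [Ioo_mem_nhdsLT_of_mem (⟨ht, le_refl _⟩ : t₀ ∈ Set.Ioc 0 t₀)] with s hs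
  rw [slope_def_field, h0]
  have : g s - 0 = g s := by ring
  rw [this]
  apply div_nonpos_of_nonneg_of_nonpos (hpos s hs.1.le hs.2) (by linarith [hs.2])

lemma finsupp_apply_le_sum {n : ℕ} (β : Fin n →₀ ℕ) (i : Fin n) :
    β i ≤ β.sum fun _ e => e := by
  by_cases h : i ∈ β.support
  · exact Finset.single_le_sum (fun j _ => Nat.zero_le _) h
  · simp [Finsupp.notMem_support_iff.mp h]

lemma eval_op_eq {n : ℕ} (a : (Fin n →₀ ℕ) → MvPolynomial (Fin n) ℝ) (x : Fin n → ℝ)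
    (q : MvPolynomial (Fin n) ℝ) :
    eval x (∑ᶠ α : Fin n →₀ ℕ, ((mfact n α : ℝ))⁻¹ • (a α * pd n α q)) =
      eval x (∑ᶠ α : Fin n →₀ ℕ, (eval x (a α) / (mfact n α : ℝ)) • pd n α q) := by
  have hfin := pd_support_finite (n := n) q
  have hs1 : (Function.support fun α : Fin n →₀ ℕ => ((mfact n α : ℝ))⁻¹ • (a α * pd n α q))
      ⊆ {α | pd n α q ≠ 0} := by
    intro α h
    simp only [Function.mem_support] at h
    simp only [Set.mem_setOf_eq]
    intro h2
    apply h
    rw [h2, mul_zero, smul_zero]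
  have hs2 : (Function.support fun α : Fin n →₀ ℕ =>
      (eval x (a α) / (mfact n α : ℝ)) • pd n α q) ⊆ {α | pd n α q ≠ 0} := by
    intro α h
    simp only [Function.mem_support] at h
    simp only [Set.mem_setOf_eq]
    intro h2
    apply h
    rw [h2, smul_zero]
  have h1 := AddMonoidHom.map_finsum ((evalLM x).toAddMonoidHom) (hfin.subset hs1)
  have h2 := AddMonoidHom.map_finsum ((evalLM x).toAddMonoidHom) (hfin.subset hs2)
  simp only [LinearMap.toAddMonoidHom_coe, evalLM_apply] at h1 h2
  rw [h1, h2]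
  apply finsum_congr
  intro α
  simp only [MvPolynomial.smul_eq_C_mul, map_mul, eval_C]
  ring

set_option maxHeartbeats 2000000 in
/-- Theorem `genK`: let `A = Σ_α (a_α/α!)∂^α` with `deg a_α ≤ |α|`, and
for `y ∈ ℝⁿ` let `A_y = Σ_α (a_α(y)/α!)∂^α`. If for every `y ∈ K` and `t ≥ 0` the operator
`e^{tA_y}` preserves `Pos(K)`, then `e^{tA}` preserves `Pos(K)` for all `t ≥ 0`. -/
theorem stmt16 (n : ℕ) (hn : 1 ≤ n) (K : Set (Fin n → ℝ)) (hKne : K.Nonempty)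
    (hKcl : IsClosed K)
    (a : (Fin n →₀ ℕ) → MvPolynomial (Fin n) ℝ)
    (hdeg : ∀ α : Fin n →₀ ℕ, (a α).totalDegree ≤ ∑ i, α i)
    (A : MvPolynomial (Fin n) ℝ →ₗ[ℝ] MvPolynomial (Fin n) ℝ)
    (hAdef : ∀ p : MvPolynomial (Fin n) ℝ,
      A p = ∑ᶠ α : Fin n →₀ ℕ, ((mfact n α : ℝ))⁻¹ • (a α * pd n α p))
    (hAfil : ∀ d : ℕ, ∀ p ∈ MvPolynomial.restrictTotalDegree (Fin n) ℝ d,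
      A p ∈ MvPolynomial.restrictTotalDegree (Fin n) ℝ d)
    (Ay : (Fin n → ℝ) → MvPolynomial (Fin n) ℝ →ₗ[ℝ] MvPolynomial (Fin n) ℝ)
    (hAydef : ∀ (y : Fin n → ℝ) (p : MvPolynomial (Fin n) ℝ),
      Ay y p = ∑ᶠ α : Fin n →₀ ℕ,
        (MvPolynomial.eval y (a α) / (mfact n α : ℝ)) • pd n α p)
    (hAyfil : ∀ (y : Fin n → ℝ) (d : ℕ),
      ∀ p ∈ MvPolynomial.restrictTotalDegree (Fin n) ℝ d,
        Ay y p ∈ MvPolynomial.restrictTotalDegree (Fin n) ℝ d)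
    (hy : ∀ y ∈ K, ∀ t : ℝ, 0 ≤ t → ∀ d : ℕ, ∀ p : MvPolynomial (Fin n) ℝ,
      ∀ hp : p ∈ MvPolynomial.restrictTotalDegree (Fin n) ℝ d, p ∈ PosOn n K →
        ((expEnd (t • ((Ay y).restrict (hAyfil y d))) ⟨p, hp⟩ :
          MvPolynomial.restrictTotalDegree (Fin n) ℝ d) : MvPolynomial (Fin n) ℝ)
          ∈ PosOn n K) :
    ∀ t : ℝ, 0 ≤ t → ∀ d : ℕ, ∀ p : MvPolynomial (Fin n) ℝ,
      ∀ hp : p ∈ MvPolynomial.restrictTotalDegree (Fin n) ℝ d, p ∈ PosOn n K →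
        ((expEnd (t • (A.restrict (hAfil d))) ⟨p, hp⟩ :
          MvPolynomial.restrictTotalDegree (Fin n) ℝ d) : MvPolynomial (Fin n) ℝ)
          ∈ PosOn n K := by
  classical
  intro t ht d p hp hpPos
  -- the pointwise identity between `A` and `Ay x`
  have hpoint : ∀ (x : Fin n → ℝ) (q : MvPolynomial (Fin n) ℝ),
      eval x (A q) = eval x (Ay x q) := by
    intro x q
    rw [hAdef q, hAydef x q]
    exact eval_op_eq a x q
  -- cross-positivity of `A` at points of `K`
  have hcross : ∀ y ∈ K, ∀ D : ℕ, ∀ c : MvPolynomial (Fin n) ℝ,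
      ∀ hc : c ∈ MvPolynomial.restrictTotalDegree (Fin n) ℝ D,
      c ∈ PosOn n K → eval y c = 0 → 0 ≤ eval y (A c) := by
    intro y hyK D c hc hcpos hc0
    have hg : ∀ s : ℝ, 0 ≤ s →
        0 ≤ ((evalLM y).comp (Submodule.subtype
            (MvPolynomial.restrictTotalDegree (Fin n) ℝ D)))
          (expEnd (s • ((Ay y).restrict (hAyfil y D))) ⟨c, hc⟩) := by
      intro s hs
      have h := hy y hyK s hs D c hc hcpos
      simp only [PosOn, Set.mem_setOf_eq] at h
      simp only [LinearMap.comp_apply, Submodule.subtype_apply, evalLM_apply]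
      exact h y hyK
    have hd0 := hasDerivAt_expEnd ((Ay y).restrict (hAyfil y D))
      (⟨c, hc⟩ : MvPolynomial.restrictTotalDegree (Fin n) ℝ D)
      ((evalLM y).comp (Submodule.subtype
        (MvPolynomial.restrictTotalDegree (Fin n) ℝ D))) 0
    have h0 : (fun s : ℝ => ((evalLM y).comp (Submodule.subtype
        (MvPolynomial.restrictTotalDegree (Fin n) ℝ D)))
          (expEnd (s • ((Ay y).restrict (hAyfil y D))) ⟨c, hc⟩)) 0 = 0 := by
      simp only [expEnd_zero_smul, LinearMap.comp_apply, Submodule.subtype_apply, evalLM_apply]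
      exact hc0
    have hval : ((evalLM y).comp (Submodule.subtype
        (MvPolynomial.restrictTotalDegree (Fin n) ℝ D)))
          (((Ay y).restrict (hAyfil y D))
            (expEnd ((0:ℝ) • ((Ay y).restrict (hAyfil y D))) ⟨c, hc⟩))
        = eval y (Ay y c) := by
      simp only [expEnd_zero_smul, LinearMap.comp_apply, Submodule.subtype_apply, evalLM_apply,
        LinearMap.restrict_apply]
    have hnn : 0 ≤ eval y (Ay y c) := by
      rw [← hval]
      exact deriv_nonneg_at_zero h0 hg hd0
    rw [hpoint y c]
    exact hnn
  -- setup at level d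
  set Vd := MvPolynomial.restrictTotalDegree (Fin n) ℝ d with hVd
  set B := A.restrict (hAfil d) with hB
  set u : ℝ → MvPolynomial (Fin n) ℝ :=
    fun s => ((expEnd (s • B) ⟨p, hp⟩ : Vd) : MvPolynomial (Fin n) ℝ) with hu
  have hderiv : ∀ (x : Fin n → ℝ) (s : ℝ),
      HasDerivAt (fun s' : ℝ => eval x (u s')) (eval x (A (u s))) s := by
    intro x s
    have h := hasDerivAt_expEnd B (⟨p, hp⟩ : Vd) ((evalLM x).comp (Submodule.subtype Vd)) s
    have heq1 : (fun s' : ℝ => ((evalLM x).comp (Submodule.subtype Vd))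
        (expEnd (s' • B) ⟨p, hp⟩)) = fun s' : ℝ => eval x (u s') := by
      funext s'
      simp only [LinearMap.comp_apply, Submodule.subtype_apply, evalLM_apply, hu]
    have heq2 : ((evalLM x).comp (Submodule.subtype Vd)) (B (expEnd (s • B) ⟨p, hp⟩))
        = eval x (A (u s)) := by
      simp only [LinearMap.comp_apply, Submodule.subtype_apply, evalLM_apply, hu, hB,
        LinearMap.restrict_apply]
    rw [heq1, heq2] at h
    exact h
  have hcont : ∀ x : Fin n → ℝ, Continuous fun s : ℝ => eval x (u s) :=
    fun x => continuous_iff_continuousAt.mpr fun s => (hderiv x s).continuousAt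
  have hccont : ∀ β : Fin n →₀ ℕ, Continuous fun s : ℝ => coeff β (u s) :=
    fun β => continuous_iff_continuousAt.mpr fun s =>
      (hasDerivAt_expEnd B (⟨p, hp⟩ : Vd) ((coeffLM β).comp (Submodule.subtype Vd)) s).continuousAt
  have hud : ∀ s : ℝ, (u s).totalDegree ≤ d :=
    fun s => (MvPolynomial.mem_restrictTotalDegree (Fin n) d _).mp (expEnd (s • B) ⟨p, hp⟩).2
  have hu0 : u 0 = p := by
    show ((expEnd ((0:ℝ) • B) ⟨p, hp⟩ : Vd) : MvPolynomial (Fin n) ℝ) = p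
    rw [expEnd_zero_smul]
  -- barrier
  set W := wB n (d + 1) with hW
  have hWdeg : W.totalDegree ≤ 2 * (d + 1) := totalDegree_wB _
  have hWmem : W ∈ MvPolynomial.restrictTotalDegree (Fin n) ℝ (2 * (d + 1)) :=
    (MvPolynomial.mem_restrictTotalDegree (Fin n) _ _).mpr hWdeg
  have hAWdeg : (A W).totalDegree ≤ 2 * (d + 1) :=
    (MvPolynomial.mem_restrictTotalDegree (Fin n) _ _).mp (hAfil (2 * (d + 1)) W hWmem)
  set M : ℝ := ∑ β ∈ (A W).support, |coeff β (A W)| with hM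
  have hM0 : 0 ≤ M := Finset.sum_nonneg fun β _ => abs_nonneg _
  have hAWbound : ∀ x : Fin n → ℝ, |eval x (A W)| ≤ M * eval x W := by
    intro x
    have := eval_abs_le (m := d + 1) hAWdeg x
    rwa [hW, eval_wB]
  have hWpos : ∀ x : Fin n → ℝ, (1:ℝ) ≤ eval x W := fun x => one_le_eval_wB _ x
  -- the key estimate, for every ε > 0
  have key : ∀ ε : ℝ, 0 < ε → ∀ x ∈ K,
      0 < eval x (u t) + ε * Real.exp ((M + 1) * t) * eval x W := by
    intro ε hε
    set v : ℝ → (Fin n → ℝ) → ℝ :=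
      fun s x => eval x (u s) + ε * Real.exp ((M + 1) * s) * eval x W with hv
    suffices hall : ∀ s ∈ Set.Icc (0:ℝ) t, ∀ x ∈ K, 0 < v s x by
      intro x hx
      exact hall t ⟨ht, le_refl t⟩ x hx
    by_contra hbad
    push_neg at hbad
    obtain ⟨s₁, hs₁, x₁, hx₁, hvs₁⟩ := hbad
    -- uniform coefficient bound on [0, t]
    set Bd : Finset (Fin n →₀ ℕ) :=
      Finset.Iic (Finsupp.equivFunOnFinite.symm fun _ : Fin n => d) with hBd
    have hsupp : ∀ s : ℝ, (u s).support ⊆ Bd := by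
      intro s β hβ
      rw [hBd, Finset.mem_Iic, Finsupp.le_def]
      intro i
      rw [Finsupp.equivFunOnFinite_symm_apply_apply]
      exact le_trans (finsupp_apply_le_sum β i)
        (le_trans (MvPolynomial.le_totalDegree hβ) (hud s))
    set N : ℝ → ℝ := fun s => ∑ β ∈ Bd, |coeff β (u s)| with hN
    have hNcont : Continuous N := continuous_finset_sum _ fun β _ => (hccont β).abs
    have hNbound : ∀ (s : ℝ) (x : Fin n → ℝ),
        |eval x (u s)| ≤ N s * (1 + ∑ i, x i ^ 2) ^ d := by
      intro s x
      have h1 := eval_abs_le (m := d) (le_trans (hud s) (by omega)) x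
      refine le_trans h1 (mul_le_mul_of_nonneg_right ?_ (by positivity))
      exact Finset.sum_le_sum_of_subset_of_nonneg (hsupp s) fun β _ _ => abs_nonneg _
    obtain ⟨s₀, hs₀mem, hCmax⟩ := isCompact_Icc.exists_isMaxOn
      (⟨0, le_refl (0:ℝ), ht⟩ : (Set.Icc (0:ℝ) t).Nonempty) hNcont.continuousOn
    set C : ℝ := N s₀ with hC
    have hC0 : 0 ≤ C := Finset.sum_nonneg fun β _ => abs_nonneg _
    -- bad points are bounded
    have hSbound : ∀ s ∈ Set.Icc (0:ℝ) t, ∀ x ∈ K, v s x ≤ 0 →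
        (∑ i, x i ^ 2) ≤ C / ε := by
      intro s hs x _ hvx
      set S : ℝ := ∑ i, x i ^ 2 with hS
      have hS0 : (0:ℝ) ≤ S := Finset.sum_nonneg fun i _ => sq_nonneg _
      have h1 : -(C * (1 + S) ^ d) ≤ eval x (u s) := by
        have := hNbound s x
        have h2 : N s ≤ C := hCmax hs
        have h3 : N s * (1 + S) ^ d ≤ C * (1 + S) ^ d :=
          mul_le_mul_of_nonneg_right h2 (by positivity)
        nlinarith [neg_abs_le (eval x (u s))]
      have hexp1 : (1:ℝ) ≤ Real.exp ((M + 1) * s) :=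
        Real.one_le_exp (by nlinarith [hs.1])
      have hWx : eval x W = (1 + S) ^ (d + 1) := by rw [hW, eval_wB]
      have h4 : ε * (1 + S) ^ (d + 1) ≤ C * (1 + S) ^ d := by
        have h5 : ε * (1 + S) ^ (d + 1) ≤ ε * Real.exp ((M + 1) * s) * eval x W := by
          rw [hWx]
          calc ε * (1 + S) ^ (d + 1) = ε * 1 * (1 + S) ^ (d + 1) := by ring
            _ ≤ ε * Real.exp ((M + 1) * s) * (1 + S) ^ (d + 1) :=
                mul_le_mul_of_nonneg_right
                  (mul_le_mul_of_nonneg_left hexp1 hε.le) (by positivity)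
        have hvx' : eval x (u s) + ε * Real.exp ((M + 1) * s) * eval x W ≤ 0 := hvx
        exact le_trans h5 (by linarith [h1])
      have h6 : ε * (1 + S) ≤ C := by
        have hp0 : (0:ℝ) < (1 + S) ^ d := by positivity
        have : ε * (1 + S) * (1 + S) ^ d ≤ C * (1 + S) ^ d := by
          calc ε * (1 + S) * (1 + S) ^ d = ε * (1 + S) ^ (d + 1) := by ring
          _ ≤ C * (1 + S) ^ d := h4
        exact le_of_mul_le_mul_right this hp0
      rw [le_div_iff₀ hε]
      nlinarith
    -- bad points are in a closed ball
    set r : ℝ := Real.sqrt (max (C / ε) 0) with hr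
    have hball : ∀ s ∈ Set.Icc (0:ℝ) t, ∀ x ∈ K, v s x ≤ 0 →
        x ∈ Metric.closedBall (0 : Fin n → ℝ) r := by
      intro s hs x hxK hvx
      rw [Metric.mem_closedBall, dist_zero_right,
        pi_norm_le_iff_of_nonneg (Real.sqrt_nonneg _)]
      intro i
      have h1 : x i ^ 2 ≤ ∑ j, x j ^ 2 := Finset.single_le_sum (f := fun j => x j ^ 2)
        (fun j _ => sq_nonneg _) (Finset.mem_univ i)
      have h2 := hSbound s hs x hxK hvx
      have h3 : x i ^ 2 ≤ max (C / ε) 0 := le_trans h1 (le_trans h2 (le_max_left _ _))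
      have h4 := Real.sqrt_le_sqrt h3
      rwa [Real.sqrt_sq_eq_abs] at h4
    -- joint continuity of v
    have hrepr : ∀ (s : ℝ) (x : Fin n → ℝ), eval x (u s)
        = ∑ β ∈ Bd, coeff β (u s) * ∏ i ∈ β.support, x i ^ β i := by
      intro s x
      rw [MvPolynomial.eval_eq]
      exact Finset.sum_subset (hsupp s) fun β _ hβ => by
        rw [MvPolynomial.notMem_support_iff] at hβ
        rw [hβ, zero_mul]
    have hvc : Continuous fun z : ℝ × (Fin n → ℝ) => v z.1 z.2 := by
      have h1 : (fun z : ℝ × (Fin n → ℝ) => v z.1 z.2)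
          = fun z : ℝ × (Fin n → ℝ) =>
            (∑ β ∈ Bd, coeff β (u z.1) * ∏ i ∈ β.support, z.2 i ^ β i)
            + ε * Real.exp ((M + 1) * z.1) * (1 + ∑ i, z.2 i ^ 2) ^ (d + 1) := by
        funext z
        simp only [hv]
        rw [hrepr z.1 z.2, hW, eval_wB]
      rw [h1]
      apply Continuous.add
      · apply continuous_finset_sum
        intro β _
        exact ((hccont β).comp continuous_fst).mul
          (continuous_finset_prod _ fun i _ => ((continuous_apply i).comp continuous_snd).pow _)
      · apply Continuous.mul
        · exact continuous_const.mul
            (Real.continuous_exp.comp (continuous_const.mul continuous_fst))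
        · exact (continuous_const.add (continuous_finset_sum _ fun i _ =>
            ((continuous_apply i).comp continuous_snd).pow _)).pow _
    -- the compact set of bad points
    set Sbad : Set (ℝ × (Fin n → ℝ)) :=
      (Set.Icc (0:ℝ) t ×ˢ (K ∩ Metric.closedBall 0 r)) ∩ {z | v z.1 z.2 ≤ 0} with hSbad
    have hSbadcpt : IsCompact Sbad := (isCompact_Icc.prod
      ((isCompact_closedBall (0 : Fin n → ℝ) r).inter_left hKcl)).inter_right
      (isClosed_le hvc continuous_const)
    have hSbadne : Sbad.Nonempty :=
      ⟨(s₁, x₁), ⟨⟨hs₁, hx₁, hball s₁ hs₁ x₁ hx₁ hvs₁⟩, hvs₁⟩⟩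
    have himgcpt : IsCompact (Prod.fst '' Sbad) := hSbadcpt.image continuous_fst
    have himgne : (Prod.fst '' Sbad).Nonempty := hSbadne.image _
    obtain ⟨z, hz, hzt⟩ := himgcpt.sInf_mem himgne
    set tstar : ℝ := z.1 with htstardef
    set xstar : Fin n → ℝ := z.2 with hxstardef
    have hztIcc : tstar ∈ Set.Icc (0:ℝ) t := hz.1.1
    have hxstarK : xstar ∈ K := hz.1.2.1
    have hzv : v tstar xstar ≤ 0 := hz.2
    -- no bad point before tstar
    have hlower : ∀ s ∈ Set.Icc (0:ℝ) t, ∀ x ∈ K, v s x ≤ 0 → tstar ≤ s := by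
      intro s hs x hxK hvx
      have h := csInf_le himgcpt.bddBelow
        (⟨(s, x), ⟨⟨hs, hxK, hball s hs x hxK hvx⟩, hvx⟩, rfl⟩ :
          s ∈ Prod.fst '' Sbad)
      rw [← hzt] at h
      exact h
    have hbefore : ∀ s : ℝ, 0 ≤ s → s < tstar → ∀ x ∈ K, 0 < v s x := by
      intro s h0 hlt x hxK
      by_contra hle
      push_neg at hle
      have hsmem : s ∈ Set.Icc (0:ℝ) t := ⟨h0, le_trans hlt.le hztIcc.2⟩
      exact absurd (hlower s hsmem x hxK hle) (not_le.mpr hlt)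
    -- tstar is positive
    have htstar0 : 0 < tstar := by
      rcases lt_or_eq_of_le hztIcc.1 with h | h
      · exact h
      · exfalso
        have hv0 : (0:ℝ) < v 0 xstar := by
          have hx1 : (0:ℝ) ≤ eval xstar (u 0) := by
            rw [hu0]
            exact hpPos xstar hxstarK
          have hx2 : (1:ℝ) ≤ eval xstar W := hWpos xstar
          have hx3 : v 0 xstar
              = eval xstar (u 0) + ε * Real.exp ((M + 1) * 0) * eval xstar W := rfl
          rw [hx3, mul_zero, Real.exp_zero]
          nlinarith
        rw [← h] at hzv
        exact absurd hzv (not_le.mpr hv0)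
    -- continuity in s
    have hcontv : ∀ x : Fin n → ℝ, Continuous fun s : ℝ => v s x := by
      intro x
      have : (fun s : ℝ => v s x)
          = fun s : ℝ => eval x (u s) + ε * Real.exp ((M + 1) * s) * eval x W := rfl
      rw [this]
      exact (hcont x).add ((continuous_const.mul
        (Real.continuous_exp.comp (continuous_const.mul continuous_id))).mul continuous_const)
    -- at time tstar, v is still nonnegative on K
    have hattop : ∀ x ∈ K, 0 ≤ v tstar x := by
      intro x hxK
      have htd : Tendsto (fun s => v s x) (𝓝[<] tstar) (𝓝 (v tstar x)) :=
        ((hcontv x).tendsto tstar).mono_left nhdsWithin_le_nhds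
      refine ge_of_tendsto htd ?_
      filter_upwards [Ioo_mem_nhdsLT_of_mem
        (⟨htstar0, le_refl _⟩ : tstar ∈ Set.Ioc 0 tstar)] with s hs
      exact (hbefore s hs.1.le hs.2 x hxK).le
    have hveq : v tstar xstar = 0 := le_antisymm hzv (hattop xstar hxstarK)
    -- cross-positivity at (tstar, xstar)
    set εe : ℝ := ε * Real.exp ((M + 1) * tstar) with hεe
    have hεe0 : 0 < εe := by rw [hεe]; positivity
    set cstar : MvPolynomial (Fin n) ℝ := u tstar + εe • W with hcstar
    have hcdeg : cstar ∈ MvPolynomial.restrictTotalDegree (Fin n) ℝ (2 * (d + 1)) := by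
      rw [MvPolynomial.mem_restrictTotalDegree, hcstar]
      apply le_trans (MvPolynomial.totalDegree_add _ _)
      simp only [max_le_iff]
      exact ⟨le_trans (hud tstar) (by omega),
        le_trans (MvPolynomial.totalDegree_smul_le _ _) hWdeg⟩
    have hceval : ∀ x : Fin n → ℝ, eval x cstar = v tstar x := by
      intro x
      rw [hcstar, map_add, MvPolynomial.smul_eq_C_mul, map_mul, eval_C, hεe]
    have hcpos : cstar ∈ PosOn n K := by
      simp only [PosOn, Set.mem_setOf_eq]
      intro x2 hx2
      rw [hceval]
      exact hattop x2 hx2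
    have hc0 : eval xstar cstar = 0 := by rw [hceval]; exact hveq
    have hcr := hcross xstar hxstarK (2 * (d + 1)) cstar hcdeg hcpos hc0
    have hAu_lb : -(εe * (M * eval xstar W)) ≤ eval xstar (A (u tstar)) := by
      have h1 : eval xstar (A cstar) = eval xstar (A (u tstar)) + εe * eval xstar (A W) := by
        rw [hcstar, map_add, _root_.map_smul, map_add, MvPolynomial.smul_eq_C_mul, map_mul, eval_C]
      have h2 : eval xstar (A W) ≤ M * eval xstar W :=
        le_trans (le_abs_self _) (hAWbound xstar)
      nlinarith [hcr, hεe0.le]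
    -- the derivative at tstar is nonpositive...
    have hexpd : HasDerivAt (fun s : ℝ => Real.exp ((M + 1) * s))
        (Real.exp ((M + 1) * tstar) * (M + 1)) tstar := by
      have h1 : HasDerivAt (fun s : ℝ => (M + 1) * s) (M + 1) tstar := by
        simpa using (hasDerivAt_id tstar).const_mul (M + 1)
      exact h1.exp
    have hgd : HasDerivAt (fun s : ℝ => v s xstar)
        (eval xstar (A (u tstar)) + ε * (Real.exp ((M + 1) * tstar) * (M + 1)) * eval xstar W)
        tstar := by
      have := (hderiv xstar tstar).add ((hexpd.const_mul ε).mul_const (eval xstar W))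
      exact this
    have hgle : eval xstar (A (u tstar))
        + ε * (Real.exp ((M + 1) * tstar) * (M + 1)) * eval xstar W ≤ 0 :=
      deriv_nonpos_at_left htstar0 hveq
        (fun s h0 hlt => (hbefore s h0 hlt xstar hxstarK).le) hgd
    -- ... but it is positive: contradiction
    have hWx1 : (1:ℝ) ≤ eval xstar W := hWpos xstar
    have hE0 : 0 < Real.exp ((M + 1) * tstar) := Real.exp_pos _
    rw [hεe] at hAu_lb
    nlinarith [hAu_lb, hgle, mul_pos (mul_pos hε hE0) (lt_of_lt_of_le zero_lt_one hWx1)]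
  -- conclude
  simp only [PosOn, Set.mem_setOf_eq]
  intro x hx
  have hKey := fun (ε : ℝ) (hε : 0 < ε) => key ε hε x hx
  set Cx : ℝ := Real.exp ((M + 1) * t) * eval x W with hCx
  have hCx0 : 0 < Cx := by
    have := hWpos x
    have := Real.exp_pos ((M + 1) * t)
    nlinarith
  show 0 ≤ eval x (u t)
  by_contra hneg
  push_neg at hneg
  have hε : 0 < -eval x (u t) / (2 * Cx) := div_pos (by linarith) (by linarith)
  have := hKey _ hε
  have he : -eval x (u t) / (2 * Cx) * Real.exp ((M + 1) * t) * eval x W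
      = -eval x (u t) / 2 := by
    rw [hCx] at hCx0 ⊢
    have hWne : eval x W ≠ 0 := by linarith [hWpos x]
    field_simp
  nlinarith
end ExpEnd
end
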